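/- arXiv:1812.11809 — 9 statements merged into one kernel-verified Lean document; each statement's English description precedes it below -/
import Mathlib

section
/- For all real numbers λ > 0, c > 0 and β > 0, one has 1/((λ + c²)/(β⁻² + λ) + 1) ≤ max{ β⁻²/(c² + β⁻²), 1/2 }. -/
/-- For all real numbers `λ > 0`, `c > 0` and `β > 0`, one has
`1/((λ + c²)/(β⁻² + λ) + 1) ≤ max { β⁻²/(c² + β⁻²), 1/2 }`. -/
theorem rate_spec_bound (lam c β : ℝ) (hlam : 0 < lam) (hc : 0 < c) (hβ : 0 < β) :
    1 / ((lam + c ^ 2) / ((β ^ 2)⁻¹ + lam) + 1) ≤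
      max ((β ^ 2)⁻¹ / (c ^ 2 + (β ^ 2)⁻¹)) (1 / 2) := by
  set b := (β ^ 2)⁻¹ with hb
  have hbpos : 0 < b := by positivity
  have hden : 0 < b + lam := by linarith
  have key : 1 / ((lam + c ^ 2) / (b + lam) + 1) = (b + lam) / (b + c ^ 2 + 2 * lam) := by
    rw [div_add' _ _ _ hden.ne', one_div_div]
    ring_nf
  rw [key]
  rcases le_total (c ^ 2) b with h | h
  · refine le_max_of_le_left ?_
    rw [div_le_div_iff₀ (by positivity) (by positivity)]
    nlinarith
  · refine le_max_of_le_right ?_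
    rw [div_le_div_iff₀ (by positivity) (by norm_num)]
    nlinarith
end

section
/- Let U, H, Q be real Hilbert spaces, E : U → H and D : U → Q continuous linear maps, and let λ > 0 and c_K > 0 satisfy ‖E w‖ ≥ c_K ‖D w‖ for all w ∈ U. If x ∈ U and s ∈ Q satisfy ⟨E x, E w⟩ + λ ⟨D x, D w⟩ = ⟨s, D w⟩ for all w ∈ U, then (λ + c_K²) ‖D x‖ ≤ ‖s‖ and ‖E x‖² + λ ‖D x‖² ≤ ‖s‖² / (λ + c_K²). -/
open scoped RealInnerProductSpace

/-- Abstract elasticity subproblem estimate: if `‖E w‖ ≥ c_K ‖D w‖` for all `w` and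
`⟨E x, E w⟩ + λ⟨D x, D w⟩ = ⟨s, D w⟩` for all `w`, then `(λ + c_K²)‖D x‖ ≤ ‖s‖` and
`‖E x‖² + λ‖D x‖² ≤ ‖s‖²/(λ + c_K²)`. -/
theorem elasticity_subproblem_estimate
    {U H Q : Type*}
    [NormedAddCommGroup U] [InnerProductSpace ℝ U] [CompleteSpace U]
    [NormedAddCommGroup H] [InnerProductSpace ℝ H] [CompleteSpace H]
    [NormedAddCommGroup Q] [InnerProductSpace ℝ Q] [CompleteSpace Q]
    (E : U →L[ℝ] H) (D : U →L[ℝ] Q)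
    (lam cK : ℝ) (hlam : 0 < lam) (hcK : 0 < cK)
    (hKorn : ∀ w : U, cK * ‖D w‖ ≤ ‖E w‖)
    (x : U) (s : Q)
    (hx : ∀ w : U, ⟪E x, E w⟫ + lam * ⟪D x, D w⟫ = ⟪s, D w⟫) :
    (lam + cK ^ 2) * ‖D x‖ ≤ ‖s‖ ∧
      ‖E x‖ ^ 2 + lam * ‖D x‖ ^ 2 ≤ ‖s‖ ^ 2 / (lam + cK ^ 2) := by
  have hxx := hx x
  rw [real_inner_self_eq_norm_sq, real_inner_self_eq_norm_sq] at hxx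
  have hE2 : cK ^ 2 * ‖D x‖ ^ 2 ≤ ‖E x‖ ^ 2 := by
    have := hKorn x
    have h1 : (cK * ‖D x‖) ^ 2 ≤ ‖E x‖ ^ 2 := by
      apply sq_le_sq' _ this
      nlinarith [norm_nonneg (D x), norm_nonneg (E x)]
    nlinarith
  have hcs : ⟪s, D x⟫ ≤ ‖s‖ * ‖D x‖ := real_inner_le_norm s (D x)
  have hkey : (lam + cK ^ 2) * ‖D x‖ ^ 2 ≤ ‖s‖ * ‖D x‖ := by nlinarith
  have hpos : (0:ℝ) < lam + cK ^ 2 := by positivity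
  have h1 : (lam + cK ^ 2) * ‖D x‖ ≤ ‖s‖ := by
    rcases eq_or_lt_of_le (norm_nonneg (D x)) with h | h
    · rw [← h]; simp [norm_nonneg]
    · nlinarith
  refine ⟨h1, ?_⟩
  have h2 : ‖E x‖ ^ 2 + lam * ‖D x‖ ^ 2 ≤ ‖s‖ * ‖D x‖ := by nlinarith
  rw [le_div_iff₀ hpos]
  nlinarith [norm_nonneg (D x), norm_nonneg s]
end

section
/- Let U, H, Q be real Hilbert spaces, E : U → H and D : U → Q continuous linear maps, and let λ > 0 and β_s > 0. Suppose x ∈ U and s ∈ Q satisfy ⟨E x, E w⟩ + λ ⟨D x, D w⟩ = ⟨s, D w⟩ for all w ∈ U, and suppose there exists w_p ∈ U with D w_p = s and ‖E w_p‖ ≤ β_s⁻¹ ‖s‖. Then ‖s‖² ≤ (β_s⁻² + λ)(‖E x‖² + λ ‖D x‖²), i.e., (β_s⁻² + λ)⁻¹ ‖s‖² ≤ ‖E x‖² + λ ‖D x‖². -/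
open scoped RealInnerProductSpace

/-- Abstract inf-sup step in the proof of Theorem 2: if
`⟨E x, E w⟩ + λ⟨D x, D w⟩ = ⟨s, D w⟩` for all `w`, and there is `w_p` with `D w_p = s`
and `‖E w_p‖ ≤ β_s⁻¹ ‖s‖`, then `‖s‖² ≤ (β_s⁻² + λ)(‖E x‖² + λ‖D x‖²)`, i.e.
`(β_s⁻² + λ)⁻¹ ‖s‖² ≤ ‖E x‖² + λ‖D x‖²`. -/
theorem infsup_pressure_estimate
    {U H Q : Type*}
    [NormedAddCommGroup U] [InnerProductSpace ℝ U] [CompleteSpace U]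
    [NormedAddCommGroup H] [InnerProductSpace ℝ H] [CompleteSpace H]
    [NormedAddCommGroup Q] [InnerProductSpace ℝ Q] [CompleteSpace Q]
    (E : U →L[ℝ] H) (D : U →L[ℝ] Q)
    (lam βs : ℝ) (hlam : 0 < lam) (hβs : 0 < βs)
    (x : U) (s : Q)
    (hx : ∀ w : U, ⟪E x, E w⟫ + lam * ⟪D x, D w⟫ = ⟪s, D w⟫)
    (hwp : ∃ wp : U, D wp = s ∧ ‖E wp‖ ≤ βs⁻¹ * ‖s‖) :
    ‖s‖ ^ 2 ≤ ((βs ^ 2)⁻¹ + lam) * (‖E x‖ ^ 2 + lam * ‖D x‖ ^ 2) ∧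
      ((βs ^ 2)⁻¹ + lam)⁻¹ * ‖s‖ ^ 2 ≤ ‖E x‖ ^ 2 + lam * ‖D x‖ ^ 2 := by
  obtain ⟨wp, hDwp, hEwp⟩ := hwp
  have h1 := hx wp
  rw [hDwp, real_inner_self_eq_norm_sq] at h1
  have hcs1 : ⟪E x, E wp⟫ ≤ ‖E x‖ * ‖E wp‖ := real_inner_le_norm _ _
  have hcs2 : ⟪D x, s⟫ ≤ ‖D x‖ * ‖s‖ := real_inner_le_norm _ _
  have hEwp0 : (0:ℝ) ≤ ‖E x‖ := norm_nonneg _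
  have hs0 : (0:ℝ) ≤ ‖s‖ := norm_nonneg _
  have hbound : ‖s‖ ^ 2 ≤ (βs⁻¹ * ‖E x‖ + lam * ‖D x‖) * ‖s‖ := by
    have : ⟪E x, E wp⟫ ≤ ‖E x‖ * (βs⁻¹ * ‖s‖) := by
      calc ⟪E x, E wp⟫ ≤ ‖E x‖ * ‖E wp‖ := hcs1
        _ ≤ ‖E x‖ * (βs⁻¹ * ‖s‖) := by
          apply mul_le_mul_of_nonneg_left hEwp hEwp0
    nlinarith [mul_le_mul_of_nonneg_left hcs2 hlam.le]
  have hstep : ‖s‖ ≤ βs⁻¹ * ‖E x‖ + lam * ‖D x‖ := by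
    rcases eq_or_lt_of_le hs0 with h | h
    · rw [← h]; positivity
    · have := (mul_le_mul_iff_of_pos_right h).mp (by calc ‖s‖ * ‖s‖ = ‖s‖ ^ 2 := by ring
        _ ≤ (βs⁻¹ * ‖E x‖ + lam * ‖D x‖) * ‖s‖ := hbound)
      exact this
  have key : ‖s‖ ^ 2 ≤ ((βs ^ 2)⁻¹ + lam) * (‖E x‖ ^ 2 + lam * ‖D x‖ ^ 2) := by
    have h2 : ‖s‖ ^ 2 ≤ (βs⁻¹ * ‖E x‖ + lam * ‖D x‖) ^ 2 := by
      have := mul_self_le_mul_self hs0 hstep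
      nlinarith
    have hb2 : (βs ^ 2)⁻¹ = βs⁻¹ * βs⁻¹ := by
      rw [sq, mul_inv]
    have hineq : (βs⁻¹ * ‖E x‖ + lam * ‖D x‖) ^ 2
        ≤ ((βs ^ 2)⁻¹ + lam) * (‖E x‖ ^ 2 + lam * ‖D x‖ ^ 2) := by
      rw [hb2]
      nlinarith [sq_nonneg (‖E x‖ - βs⁻¹ * ‖D x‖), hlam.le, inv_pos.mpr hβs]
    linarith
  refine ⟨key, ?_⟩
  have hpos : (0:ℝ) < (βs ^ 2)⁻¹ + lam := by positivity
  rw [inv_mul_le_iff₀ hpos]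
  linarith [key]
end

section
/- In the fixed-stress error framework (continuous), if L ≥ 1/(λ + c_K²), then for every m ≥ 0: (1/2)(‖E e_u^{m+1}‖² + λ ‖D e_u^{m+1}‖²) + Σᵢ Rᵢ⁻¹ ‖e_{v,i}^{m+1}‖² + Σᵢ,ⱼ Mᵢⱼ ⟨e_{p,j}^{m+1}, e_{p,i}^{m+1}⟩ + (L/2) ‖Σᵢ e_{p,i}^{m+1}‖² ≤ (L/2) ‖Σᵢ e_{p,i}^m‖². -/
open scoped RealInnerProductSpace


private lemma fixed_stress_aux (K L X nd ns : ℝ) (hK : 0 < K) (hLK : 1 ≤ L * K)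
    (hnd : 0 ≤ nd) (hns : 0 ≤ ns) (hXnn : 0 ≤ X) (hXle : X ≤ ns * nd)
    (hK1 : K * nd ^ 2 ≤ X) : X ≤ L * ns ^ 2 := by
  have hLpos : 0 < L := by nlinarith
  rcases eq_or_lt_of_le hXnn with h0 | h0
  · nlinarith [sq_nonneg ns]
  · have ha : X * X ≤ (ns * nd) * (ns * nd) :=
      mul_le_mul hXle hXle hXnn (mul_nonneg hns hnd)
    have hb : ns ^ 2 * (K * nd ^ 2) ≤ ns ^ 2 * X :=
      mul_le_mul_of_nonneg_left hK1 (sq_nonneg ns)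
    have h1 : K * X ^ 2 ≤ ns ^ 2 * X := by nlinarith [ha, hb, hK.le]
    have h2 : K * X ≤ ns ^ 2 := by nlinarith [h1, h0]
    have h3 : ns ^ 2 ≤ L * K * ns ^ 2 := by nlinarith [sq_nonneg ns]
    nlinarith [h2, h3, hK]

/-- Lemma 1 of the paper: in the fixed-stress error framework (continuous), if
`L ≥ 1/(λ + c_K²)`, then for every `m ≥ 0` the errors of the `(m+1)`-st fixed-stress
iterate satisfy the contraction-type energy estimate. -/
theorem fixed_stress_lemma1
    {U H Q : Type*}
    [NormedAddCommGroup U] [InnerProductSpace ℝ U] [CompleteSpace U]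
    [NormedAddCommGroup H] [InnerProductSpace ℝ H] [CompleteSpace H]
    [NormedAddCommGroup Q] [InnerProductSpace ℝ Q] [CompleteSpace Q]
    (n : ℕ) (hn : 1 ≤ n)
    (V : Fin n → Type*)
    [∀ i, NormedAddCommGroup (V i)] [∀ i, InnerProductSpace ℝ (V i)]
    [∀ i, CompleteSpace (V i)]
    (E : U →L[ℝ] H) (D : U →L[ℝ] Q) (Dv : ∀ i, V i →L[ℝ] Q)
    (lam L cK : ℝ) (Rinv : Fin n → ℝ)
    (hlam : 0 < lam) (hL : 0 < L) (hRinv : ∀ i, 0 < Rinv i) (hcK : 0 < cK)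
    (M : Matrix (Fin n) (Fin n) ℝ) (hM : M.PosSemidef)
    (hKorn : ∀ w : U, cK * ‖D w‖ ≤ ‖E w‖)
    (eu : ℕ → U) (ev : ℕ → ∀ i, V i) (ep : ℕ → Fin n → Q)
    (heq1 : ∀ (m : ℕ) (q : Fin n → Q),
      -(∑ i, ⟪Dv i (ev (m + 1) i), q i⟫)
          - ∑ i, ∑ j, M i j * ⟪ep (m + 1) j, q i⟫
          - L * ⟪∑ j, ep (m + 1) j, ∑ i, q i⟫
        = -(L * ⟪∑ j, ep m j, ∑ i, q i⟫) + ⟪D (eu m), ∑ i, q i⟫)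
    (heq2 : ∀ (m : ℕ) (z : ∀ i, V i),
      ∑ i, Rinv i * ⟪ev (m + 1) i, z i⟫ - ∑ i, ⟪ep (m + 1) i, Dv i (z i)⟫ = 0)
    (heq3 : ∀ (m : ℕ) (w : U),
      ⟪E (eu m), E w⟫ + lam * ⟪D (eu m), D w⟫ = ⟪∑ i, ep m i, D w⟫)
    (hLge : 1 / (lam + cK ^ 2) ≤ L) :
    ∀ m : ℕ,
      (1 / 2) * (‖E (eu (m + 1))‖ ^ 2 + lam * ‖D (eu (m + 1))‖ ^ 2)
          + ∑ i, Rinv i * ‖ev (m + 1) i‖ ^ 2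
          + ∑ i, ∑ j, M i j * ⟪ep (m + 1) j, ep (m + 1) i⟫
          + (L / 2) * ‖∑ i, ep (m + 1) i‖ ^ 2
        ≤ (L / 2) * ‖∑ i, ep m i‖ ^ 2 := by
  intro m
  set u : U := eu m with hu
  set u' : U := eu (m + 1) with hu'
  set s : Q := ∑ i, ep m i with hs
  set s' : Q := ∑ i, ep (m + 1) i with hs'
  clear_value u u' s s'
  -- Step 1: combine the two flow error equations tested with the errors themselves.
  have hRsum : ∑ i, Rinv i * ‖ev (m + 1) i‖ ^ 2
      = ∑ i, ⟪Dv i (ev (m + 1) i), ep (m + 1) i⟫ := by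
    have h2 := heq2 m (ev (m + 1))
    calc ∑ i, Rinv i * ‖ev (m + 1) i‖ ^ 2
        = ∑ i, Rinv i * ⟪ev (m + 1) i, ev (m + 1) i⟫ := by
          simp [real_inner_self_eq_norm_sq]
      _ = ∑ i, ⟪ep (m + 1) i, Dv i (ev (m + 1) i)⟫ := sub_eq_zero.mp h2
      _ = ∑ i, ⟪Dv i (ev (m + 1) i), ep (m + 1) i⟫ := by
          simp [real_inner_comm]
  have h1 := heq1 m (ep (m + 1))
  rw [← hs, ← hs', ← hu] at h1
  have hStar : (∑ i, Rinv i * ‖ev (m + 1) i‖ ^ 2)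
      + (∑ i, ∑ j, M i j * ⟪ep (m + 1) j, ep (m + 1) i⟫)
      + L * ⟪s', s'⟫ = L * ⟪s, s'⟫ - ⟪D u, s'⟫ := by
    rw [hRsum]; linarith only [h1]
  -- Step 2: elasticity error equations tested with u, u'.
  have hA := heq3 (m + 1) (eu (m + 1))
  have hB := heq3 (m + 1) (eu m)
  have hC := heq3 m (eu m)
  have hD := heq3 m (eu (m + 1))
  simp only [← hu, ← hu', ← hs, ← hs'] at hA hB hC hD
  rw [real_inner_self_eq_norm_sq, real_inner_self_eq_norm_sq] at hA
  rw [real_inner_self_eq_norm_sq, real_inner_self_eq_norm_sq] at hC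
  rw [real_inner_comm (E u') (E u), real_inner_comm (D u') (D u)] at hD
  -- Expansions of squared norms of differences.
  have hEsub : ‖E u' - E u‖ ^ 2 = ‖E u'‖ ^ 2 - 2 * ⟪E u', E u⟫ + ‖E u‖ ^ 2 :=
    norm_sub_sq_real _ _
  have hDsub : ‖D u' - D u‖ ^ 2 = ‖D u'‖ ^ 2 - 2 * ⟪D u', D u⟫ + ‖D u‖ ^ 2 :=
    norm_sub_sq_real _ _
  have hSsub : ‖s' - s‖ ^ 2 = ‖s'‖ ^ 2 - 2 * ⟪s', s⟫ + ‖s‖ ^ 2 :=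
    norm_sub_sq_real _ _
  -- Step 3: the difference identity a(δu, δu) = ⟪δS, D δu⟫.
  have hX_eq : ‖E u' - E u‖ ^ 2 + lam * ‖D u' - D u‖ ^ 2
      = ⟪s' - s, D u' - D u⟫ := by
    rw [hEsub, hDsub, inner_sub_left, inner_sub_right, inner_sub_right]
    linear_combination hA - hB + hC - hD
  -- Step 4: Cauchy–Schwarz and Korn.
  have hCS : ⟪s' - s, D u' - D u⟫ ≤ ‖s' - s‖ * ‖D u' - D u‖ :=
    real_inner_le_norm _ _
  have hKorn2 : cK ^ 2 * ‖D u' - D u‖ ^ 2 ≤ ‖E u' - E u‖ ^ 2 := by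
    have hk := hKorn (u' - u)
    rw [map_sub, map_sub] at hk
    have h0 : 0 ≤ cK * ‖D u' - D u‖ := mul_nonneg hcK.le (norm_nonneg _)
    nlinarith [mul_self_le_mul_self h0 hk]
  -- Step 5: the key estimate  ‖Eδ‖² + λ‖Dδ‖² ≤ L ‖δS‖².
  have hK : (0 : ℝ) < lam + cK ^ 2 := by positivity
  have hLK : 1 ≤ L * (lam + cK ^ 2) := by
    have h := (div_le_iff₀ hK).mp hLge
    linarith only [h]
  have hann : (0:ℝ) ≤ ‖E u' - E u‖ := norm_nonneg _
  have hbnn : (0:ℝ) ≤ ‖D u' - D u‖ := norm_nonneg _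
  have hcnn : (0:ℝ) ≤ ‖s' - s‖ := norm_nonneg _
  set a : ℝ := ‖E u' - E u‖ with hadef
  set b : ℝ := ‖D u' - D u‖ with hbdef
  set c : ℝ := ‖s' - s‖ with hcdef
  clear_value a b c
  have hKey : a ^ 2 + lam * b ^ 2 ≤ L * c ^ 2 := by
    refine fixed_stress_aux (lam + cK ^ 2) L (a ^ 2 + lam * b ^ 2) b c
      hK hLK hbnn hcnn (by positivity) ?_ ?_
    · rw [hX_eq]; exact hCS
    · have hdist : (lam + cK ^ 2) * b ^ 2 = lam * b ^ 2 + cK ^ 2 * b ^ 2 := by ring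
      linarith only [hKorn2, hdist]
  -- Step 6: assemble everything.
  have hKey' : (‖E u'‖ ^ 2 - 2 * ⟪E u', E u⟫ + ‖E u‖ ^ 2)
      + lam * (‖D u'‖ ^ 2 - 2 * ⟪D u', D u⟫ + ‖D u‖ ^ 2)
      ≤ L * (‖s'‖ ^ 2 - 2 * ⟪s', s⟫ + ‖s‖ ^ 2) := by
    rw [← hEsub, ← hDsub, ← hSsub]; exact hKey
  rw [real_inner_self_eq_norm_sq, real_inner_comm s' s, real_inner_comm s' (D u)]
    at hStar
  have hEnn : (0 : ℝ) ≤ ‖E u‖ ^ 2 := sq_nonneg _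
  have hDnn : (0 : ℝ) ≤ lam * ‖D u‖ ^ 2 := by positivity
  linarith only [hStar, hB, hKey', hEnn, hDnn]
end

section
/- In the fixed-stress error framework (continuous), assume additionally that there is β_s > 0 such that for every s ∈ Q there exists w ∈ U with D w = s and ‖E w‖ ≤ β_s⁻¹ ‖s‖, and that L ≥ 1/(λ + c_K²). Then for every m ≥ 0: (L⁻¹/(β_s⁻² + λ) + 1) ‖Σᵢ e_{p,i}^{m+1}‖² ≤ ‖Σᵢ e_{p,i}^m‖². In particular ‖Σᵢ e_{p,i}^{m+1}‖² ≤ rate² ‖Σᵢ e_{p,i}^m‖² with rate² = 1/(L⁻¹/(β_s⁻² + λ) + 1) < 1. -/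
open scoped RealInnerProductSpace

lemma sum_swap3 {n : ℕ} (t : Fin n → Fin n → Fin n → ℝ) :
    ∑ i, ∑ j, ∑ k, t i j k = ∑ k, ∑ j, ∑ i, t i j k := by
  rw [Finset.sum_comm]
  rw [show (∑ j, ∑ i, ∑ k, t i j k) = ∑ j, ∑ k, ∑ i, t i j k from
    Finset.sum_congr rfl fun j _ => Finset.sum_comm]
  exact Finset.sum_comm

lemma psd_quadform_inner {Q : Type*} [NormedAddCommGroup Q] [InnerProductSpace ℝ Q]
    {n : ℕ} {M : Matrix (Fin n) (Fin n) ℝ} (hM : M.PosSemidef) (p : Fin n → Q) :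
    0 ≤ ∑ i, ∑ j, M i j * ⟪p j, p i⟫ := by
  obtain ⟨B, rfl⟩ : ∃ B : Matrix (Fin n) (Fin n) ℝ, M = B.conjTranspose * B := by
    open scoped MatrixOrder in
    obtain ⟨B, hB⟩ := CStarAlgebra.nonneg_iff_eq_star_mul_self.mp hM.nonneg
    exact ⟨B, hB⟩
  have key : ∑ i, ∑ j, (B.conjTranspose * B) i j * ⟪p j, p i⟫
      = ∑ k, ⟪∑ j, B k j • p j, ∑ i, B k i • p i⟫ := by
    simp only [Matrix.mul_apply, Matrix.conjTranspose_apply, star_trivial,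
      sum_inner, inner_sum, real_inner_smul_left, real_inner_smul_right,
      Finset.sum_mul, Finset.mul_sum]
    rw [sum_swap3]
    exact Finset.sum_congr rfl fun k _ => Finset.sum_congr rfl fun j _ =>
      Finset.sum_congr rfl fun i _ => by rw [real_inner_comm]; ring
  rw [key]
  exact Finset.sum_nonneg fun k _ => real_inner_self_nonneg

set_option maxHeartbeats 2000000 in
/-- Theorem 2 ((error_sum_p)–(rate_gen)) of the paper: under the abstract Stokes inf-sup
condition with constant β_s and L ≥ 1/(λ + c_K²), the fixed-stress iteration contracts:
(L⁻¹/(β_s⁻² + λ) + 1)‖Σᵢ e_{p,i}^{m+1}‖² ≤ ‖Σᵢ e_{p,i}^m‖², and in particular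
‖Σᵢ e_{p,i}^{m+1}‖² ≤ rate²‖Σᵢ e_{p,i}^m‖² with rate² = 1/(L⁻¹/(β_s⁻² + λ) + 1) < 1. -/
theorem fixed_stress_contraction
    {U H Q : Type*}
    [NormedAddCommGroup U] [InnerProductSpace ℝ U] [CompleteSpace U]
    [NormedAddCommGroup H] [InnerProductSpace ℝ H] [CompleteSpace H]
    [NormedAddCommGroup Q] [InnerProductSpace ℝ Q] [CompleteSpace Q]
    (n : ℕ) (hn : 1 ≤ n)
    (V : Fin n → Type*)
    [∀ i, NormedAddCommGroup (V i)] [∀ i, InnerProductSpace ℝ (V i)]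
    [∀ i, CompleteSpace (V i)]
    (E : U →L[ℝ] H) (D : U →L[ℝ] Q) (Dv : ∀ i, V i →L[ℝ] Q)
    (lam L cK : ℝ) (Rinv : Fin n → ℝ)
    (hlam : 0 < lam) (hL : 0 < L) (hRinv : ∀ i, 0 < Rinv i) (hcK : 0 < cK)
    (M : Matrix (Fin n) (Fin n) ℝ) (hM : M.PosSemidef)
    (hKorn : ∀ w : U, cK * ‖D w‖ ≤ ‖E w‖)
    (eu : ℕ → U) (ev : ℕ → ∀ i, V i) (ep : ℕ → Fin n → Q)
    (heq1 : ∀ (m : ℕ) (q : Fin n → Q),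
      -(∑ i, ⟪Dv i (ev (m + 1) i), q i⟫)
          - ∑ i, ∑ j, M i j * ⟪ep (m + 1) j, q i⟫
          - L * ⟪∑ j, ep (m + 1) j, ∑ i, q i⟫
        = -(L * ⟪∑ j, ep m j, ∑ i, q i⟫) + ⟪D (eu m), ∑ i, q i⟫)
    (heq2 : ∀ (m : ℕ) (z : ∀ i, V i),
      ∑ i, Rinv i * ⟪ev (m + 1) i, z i⟫ - ∑ i, ⟪ep (m + 1) i, Dv i (z i)⟫ = 0)
    (heq3 : ∀ (m : ℕ) (w : U),
      ⟪E (eu m), E w⟫ + lam * ⟪D (eu m), D w⟫ = ⟪∑ i, ep m i, D w⟫)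
    (hLge : 1 / (lam + cK ^ 2) ≤ L)
    (βs : ℝ) (hβs : 0 < βs)
    (hinfsup : ∀ s : Q, ∃ w : U, D w = s ∧ ‖E w‖ ≤ βs⁻¹ * ‖s‖) :
    (∀ m : ℕ,
      (L⁻¹ / ((βs ^ 2)⁻¹ + lam) + 1) * ‖∑ i, ep (m + 1) i‖ ^ 2 ≤ ‖∑ i, ep m i‖ ^ 2) ∧
    (∀ m : ℕ,
      ‖∑ i, ep (m + 1) i‖ ^ 2
        ≤ (1 / (L⁻¹ / ((βs ^ 2)⁻¹ + lam) + 1)) * ‖∑ i, ep m i‖ ^ 2) ∧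
    1 / (L⁻¹ / ((βs ^ 2)⁻¹ + lam) + 1) < 1 := by
  have hs2 : (0:ℝ) < (βs ^ 2)⁻¹ + lam := add_pos (inv_pos.mpr (pow_pos hβs 2)) hlam
  have hc : (0:ℝ) < L⁻¹ / ((βs ^ 2)⁻¹ + lam) := div_pos (inv_pos.mpr hL) hs2
  -- the inf-sup estimate (star)
  have hstar : ∀ m : ℕ, ‖∑ i, ep m i‖ ^ 2
      ≤ ((βs ^ 2)⁻¹ + lam) * (‖E (eu m)‖ ^ 2 + lam * ‖D (eu m)‖ ^ 2) := by
    intro m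
    obtain ⟨w, hw1, hw2⟩ := hinfsup (∑ i, ep m i)
    have h3 := heq3 m w
    rw [hw1, real_inner_self_eq_norm_sq] at h3
    have c1 : ⟪E (eu m), E w⟫ ≤ ‖E (eu m)‖ * ‖E w‖ := real_inner_le_norm _ _
    have c2 : ⟪D (eu m), ∑ i, ep m i⟫ ≤ ‖D (eu m)‖ * ‖∑ i, ep m i‖ := real_inner_le_norm _ _
    have ha : (0:ℝ) ≤ ‖E (eu m)‖ := norm_nonneg _
    have hb : (0:ℝ) ≤ ‖D (eu m)‖ := norm_nonneg _
    have hp : (0:ℝ) ≤ ‖∑ i, ep m i‖ := norm_nonneg _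
    have h4 : ‖∑ i, ep m i‖ ^ 2
        ≤ βs⁻¹ * ‖E (eu m)‖ * ‖∑ i, ep m i‖ + lam * (‖D (eu m)‖ * ‖∑ i, ep m i‖) := by
      nlinarith [mul_le_mul_of_nonneg_left hw2 ha, mul_le_mul_of_nonneg_left c2 hlam.le]
    have hps : ‖∑ i, ep m i‖ ≤ βs⁻¹ * ‖E (eu m)‖ + lam * ‖D (eu m)‖ := by
      rcases eq_or_lt_of_le hp with h0 | h0
      · rw [← h0]
        have hβi : (0:ℝ) ≤ βs⁻¹ := inv_nonneg.mpr hβs.le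
        nlinarith
      · nlinarith [h4]
    have hb2 : (βs ^ 2)⁻¹ = βs⁻¹ * βs⁻¹ := by rw [sq, mul_inv]
    have hpp : ‖∑ i, ep m i‖ ^ 2 ≤ (βs⁻¹ * ‖E (eu m)‖ + lam * ‖D (eu m)‖) ^ 2 :=
      pow_le_pow_left₀ hp hps 2
    nlinarith [mul_nonneg hlam.le (sq_nonneg (‖E (eu m)‖ - βs⁻¹ * ‖D (eu m)‖)), hb2, hpp]
  -- the contraction estimate
  have key : ∀ m : ℕ, (L⁻¹ / ((βs ^ 2)⁻¹ + lam) + 1) * ‖∑ i, ep (m + 1) i‖ ^ 2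
      ≤ ‖∑ i, ep m i‖ ^ 2 := by
    intro m
    have h1 := heq1 m (ep (m + 1))
    rw [real_inner_self_eq_norm_sq] at h1
    -- nonnegativity of the velocity term
    have hvpos : 0 ≤ ∑ i, ⟪Dv i (ev (m+1) i), ep (m+1) i⟫ := by
      have h2 := heq2 m (ev (m+1))
      have hcomm : ∑ i, ⟪Dv i (ev (m+1) i), ep (m+1) i⟫
          = ∑ i, ⟪ep (m+1) i, Dv i (ev (m+1) i)⟫ :=
        Finset.sum_congr rfl fun i _ => real_inner_comm _ _
      have heqv : ∑ i, ⟪ep (m+1) i, Dv i (ev (m+1) i)⟫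
          = ∑ i, Rinv i * ⟪ev (m+1) i, ev (m+1) i⟫ := by linarith
      rw [hcomm, heqv]
      exact Finset.sum_nonneg fun i _ =>
        mul_nonneg (hRinv i).le real_inner_self_nonneg
    have hMpos := psd_quadform_inner hM (ep (m+1))
    have h3 := heq3 (m+1) (eu m)
    -- delta estimate
    have hdelta : ‖E (eu (m+1)) - E (eu m)‖ ^ 2 + lam * ‖D (eu (m+1)) - D (eu m)‖ ^ 2
        ≤ L * ‖(∑ i, ep (m+1) i) - ∑ i, ep m i‖ ^ 2 := by
      have ha := heq3 (m+1) (eu (m+1) - eu m)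
      have hb := heq3 m (eu (m+1) - eu m)
      have e1 : E (eu (m+1) - eu m) = E (eu (m+1)) - E (eu m) := map_sub _ _ _
      have e2 : D (eu (m+1) - eu m) = D (eu (m+1)) - D (eu m) := map_sub _ _ _
      simp only [e1, e2, inner_sub_right] at ha hb
      have hsub : ‖E (eu (m+1)) - E (eu m)‖ ^ 2 + lam * ‖D (eu (m+1)) - D (eu m)‖ ^ 2
          = ⟪(∑ i, ep (m+1) i) - ∑ i, ep m i, D (eu (m+1)) - D (eu m)⟫ := by
        rw [norm_sub_sq_real, norm_sub_sq_real, inner_sub_left, inner_sub_right,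
          inner_sub_right]
        simp only [real_inner_self_eq_norm_sq] at ha hb
        have cE : ⟪E (eu m), E (eu (m+1))⟫ = ⟪E (eu (m+1)), E (eu m)⟫ := real_inner_comm _ _
        have cD : ⟪D (eu m), D (eu (m+1))⟫ = ⟪D (eu (m+1)), D (eu m)⟫ := real_inner_comm _ _
        linear_combination ha - hb + cE + lam * cD
      have hCS : ⟪(∑ i, ep (m+1) i) - ∑ i, ep m i, D (eu (m+1)) - D (eu m)⟫
          ≤ ‖(∑ i, ep (m+1) i) - ∑ i, ep m i‖ * ‖D (eu (m+1)) - D (eu m)‖ :=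
        real_inner_le_norm _ _
      have hK := hKorn (eu (m+1) - eu m)
      rw [e1, e2] at hK
      set a := ‖E (eu (m+1)) - E (eu m)‖ with hadef
      set d := ‖D (eu (m+1)) - D (eu m)‖ with hddef
      set c := ‖(∑ i, ep (m+1) i) - ∑ i, ep m i‖ with hcdef
      have hd0 : (0:ℝ) ≤ d := norm_nonneg _
      have hc0 : (0:ℝ) ≤ c := norm_nonneg _
      have hsub2 : a ^ 2 + lam * d ^ 2 ≤ c * d := by rw [hsub]; exact hCS
      have hK2 : cK ^ 2 * d ^ 2 ≤ a ^ 2 := by nlinarith [hK, mul_nonneg hcK.le hd0]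
      have hs' : (0:ℝ) < lam + cK ^ 2 := by positivity
      have hLs : 1 ≤ L * (lam + cK ^ 2) := by
        rw [div_le_iff₀ hs'] at hLge
        linarith
      have t0 : (lam + cK ^ 2) * d ^ 2 ≤ c * d := by linarith [hsub2, hK2]
      have t1 : (lam + cK ^ 2) * (c * d) ≤ c ^ 2 := by
        nlinarith [mul_le_mul_of_nonneg_left t0 hs'.le, sq_nonneg ((lam + cK ^ 2) * d - c)]
      nlinarith [mul_le_mul_of_nonneg_left hsub2 hs'.le, t1,
        mul_le_mul_of_nonneg_right hLs (sq_nonneg c), hs']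
    -- polarization identities
    have hpolP : ‖(∑ i, ep (m+1) i) - ∑ i, ep m i‖ ^ 2
        = ‖∑ i, ep (m+1) i‖ ^ 2 - 2 * ⟪∑ i, ep (m+1) i, ∑ i, ep m i⟫ + ‖∑ i, ep m i‖ ^ 2 :=
      norm_sub_sq_real _ _
    have hpolE : ‖E (eu (m+1)) - E (eu m)‖ ^ 2
        = ‖E (eu (m+1))‖ ^ 2 - 2 * ⟪E (eu (m+1)), E (eu m)⟫ + ‖E (eu m)‖ ^ 2 :=
      norm_sub_sq_real _ _
    have hpolD : ‖D (eu (m+1)) - D (eu m)‖ ^ 2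
        = ‖D (eu (m+1))‖ ^ 2 - 2 * ⟪D (eu (m+1)), D (eu m)⟫ + ‖D (eu m)‖ ^ 2 :=
      norm_sub_sq_real _ _
    have hcP : ⟪∑ j, ep m j, ∑ i, ep (m+1) i⟫ = ⟪∑ i, ep (m+1) i, ∑ i, ep m i⟫ :=
      real_inner_comm _ _
    have hcy : ⟪D (eu m), ∑ i, ep (m+1) i⟫ = ⟪∑ i, ep (m+1) i, D (eu m)⟫ :=
      real_inner_comm _ _
    have h2x : 2 * ⟪∑ j, ep m j, ∑ i, ep (m+1) i⟫
        = ‖∑ i, ep (m+1) i‖ ^ 2 + ‖∑ i, ep m i‖ ^ 2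
          - ‖(∑ i, ep (m+1) i) - ∑ i, ep m i‖ ^ 2 := by
      linear_combination 2 * hcP + hpolP
    have hLx : 2 * (L * ⟪∑ j, ep m j, ∑ i, ep (m+1) i⟫)
        = L * ‖∑ i, ep (m+1) i‖ ^ 2 + L * ‖∑ i, ep m i‖ ^ 2
          - L * ‖(∑ i, ep (m+1) i) - ∑ i, ep m i‖ ^ 2 := by
      linear_combination L * h2x
    have h2y : 2 * ⟪D (eu m), ∑ i, ep (m+1) i⟫
        = ‖E (eu (m+1))‖ ^ 2 + ‖E (eu m)‖ ^ 2 - ‖E (eu (m+1)) - E (eu m)‖ ^ 2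
          + lam * ‖D (eu (m+1))‖ ^ 2 + lam * ‖D (eu m)‖ ^ 2
          - lam * ‖D (eu (m+1)) - D (eu m)‖ ^ 2 := by
      linear_combination 2 * hcy - 2 * h3 + hpolE + lam * hpolD
    have ha0 : (0:ℝ) ≤ ‖E (eu m)‖ ^ 2 := sq_nonneg _
    have hlb0 : (0:ℝ) ≤ lam * ‖D (eu m)‖ ^ 2 := mul_nonneg hlam.le (sq_nonneg _)
    -- main energy inequality
    have main2 : L * ‖∑ i, ep (m+1) i‖ ^ 2
        + (‖E (eu (m+1))‖ ^ 2 + lam * ‖D (eu (m+1))‖ ^ 2) ≤ L * ‖∑ i, ep m i‖ ^ 2 := by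
      linarith [h1, hLx, h2y, hdelta, hvpos, hMpos, ha0, hlb0]
    -- combine with the inf-sup estimate at m+1
    have hA1 := hstar (m+1)
    have hpos : (0:ℝ) < L * ((βs ^ 2)⁻¹ + lam) := mul_pos hL hs2
    rw [← mul_le_mul_iff_right₀ hpos]
    have hcs : L * ((βs ^ 2)⁻¹ + lam) * ((L⁻¹ / ((βs ^ 2)⁻¹ + lam) + 1)
        * ‖∑ i, ep (m+1) i‖ ^ 2)
        = (1 + L * ((βs ^ 2)⁻¹ + lam)) * ‖∑ i, ep (m+1) i‖ ^ 2 := by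
      field_simp
    rw [hcs]
    have t1 := mul_le_mul_of_nonneg_left main2 hs2.le
    nlinarith [t1, hA1]
  refine ⟨key, fun m => ?_, ?_⟩
  · have h1p : (0:ℝ) < L⁻¹ / ((βs ^ 2)⁻¹ + lam) + 1 := by linarith
    have e : (1 / (L⁻¹ / ((βs ^ 2)⁻¹ + lam) + 1))
        * ((L⁻¹ / ((βs ^ 2)⁻¹ + lam) + 1) * ‖∑ i, ep (m+1) i‖ ^ 2)
        = ‖∑ i, ep (m+1) i‖ ^ 2 := by
      field_simp
    calc ‖∑ i, ep (m+1) i‖ ^ 2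
        = (1 / (L⁻¹ / ((βs ^ 2)⁻¹ + lam) + 1))
          * ((L⁻¹ / ((βs ^ 2)⁻¹ + lam) + 1) * ‖∑ i, ep (m+1) i‖ ^ 2) := e.symm
      _ ≤ (1 / (L⁻¹ / ((βs ^ 2)⁻¹ + lam) + 1)) * ‖∑ i, ep m i‖ ^ 2 :=
        mul_le_mul_of_nonneg_left (key m) (div_nonneg zero_le_one h1p.le)
  · have h1p : (0:ℝ) < L⁻¹ / ((βs ^ 2)⁻¹ + lam) + 1 := by linarith
    rw [div_lt_one h1p]
    linarith
end

section
/- In the fixed-stress error framework (continuous), assume additionally that there is β_s > 0 such that for every s ∈ Q there exists w ∈ U with D w = s and ‖E w‖ ≤ β_s⁻¹ ‖s‖, and that L ≥ 1/(λ + c_K²). Set ρ² := 1/(L⁻¹/(β_s⁻² + λ) + 1) and, for m ≥ 0, g^m := −L Σᵢ e_{p,i}^m + D e_u^m − D e_u^{m+1} ∈ Q. Then for every m ≥ 0: ‖g^m‖ ≤ 3 L ρ^m ‖Σᵢ e_{p,i}^0‖. -/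
open scoped RealInnerProductSpace

set_option maxHeartbeats 2000000

/-- Quadratic form of a positive semidefinite matrix against Hilbert-space vectors
is nonnegative. -/
lemma psd_inner_quadratic_nonneg {n : ℕ} (M : Matrix (Fin n) (Fin n) ℝ)
    (hM : M.PosSemidef) {Q : Type*} [NormedAddCommGroup Q] [InnerProductSpace ℝ Q]
    (p : Fin n → Q) : 0 ≤ ∑ i, ∑ j, M i j * ⟪p j, p i⟫ := by
  obtain ⟨B, hB⟩ := (by open scoped MatrixOrder in exact CStarAlgebra.nonneg_iff_eq_star_mul_self.mp hM.nonneg :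
    ∃ B : Matrix (Fin n) (Fin n) ℝ, M = star B * B)
  have hMij : ∀ i j, M i j = ∑ k, B k i * B k j := by
    intro i j
    rw [hB]
    simp [Matrix.mul_apply, Matrix.conjTranspose_apply]
  have hrhs : ∀ k : Fin n, ⟪∑ j, B k j • p j, ∑ i, B k i • p i⟫
      = ∑ i, ∑ j, (B k i * B k j) * ⟪p j, p i⟫ := by
    intro k
    rw [inner_sum]
    refine Finset.sum_congr rfl fun i _ => ?_
    rw [real_inner_smul_right, sum_inner, Finset.mul_sum]
    refine Finset.sum_congr rfl fun j _ => ?_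
    rw [real_inner_smul_left]; ring
  have key : ∑ i, ∑ j, M i j * ⟪p j, p i⟫
      = ∑ k, ⟪∑ j, B k j • p j, ∑ i, B k i • p i⟫ := by
    calc ∑ i, ∑ j, M i j * ⟪p j, p i⟫
        = ∑ i, ∑ j, ∑ k, (B k i * B k j) * ⟪p j, p i⟫ := by
          simp only [hMij, Finset.sum_mul]
      _ = ∑ i, ∑ k, ∑ j, (B k i * B k j) * ⟪p j, p i⟫ :=
          Finset.sum_congr rfl fun i _ => Finset.sum_comm
      _ = ∑ k, ∑ i, ∑ j, (B k i * B k j) * ⟪p j, p i⟫ := Finset.sum_comm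
      _ = ∑ k, ⟪∑ j, B k j • p j, ∑ i, B k i • p i⟫ :=
          Finset.sum_congr rfl fun k _ => (hrhs k).symm
  rw [key]
  exact Finset.sum_nonneg fun k _ => real_inner_self_nonneg

/-- Right-hand-side bound (error:stability1) in the proof of Theorem 3: with
g^m = −L Σᵢ e_{p,i}^m + D e_u^m − D e_u^{m+1} and ρ the contraction rate,
‖g^m‖ ≤ 3 L ρ^m ‖Σᵢ e_{p,i}^0‖. -/
theorem fixed_stress_rhs_bound
    {U H Q : Type*}
    [NormedAddCommGroup U] [InnerProductSpace ℝ U] [CompleteSpace U]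
    [NormedAddCommGroup H] [InnerProductSpace ℝ H] [CompleteSpace H]
    [NormedAddCommGroup Q] [InnerProductSpace ℝ Q] [CompleteSpace Q]
    (n : ℕ) (hn : 1 ≤ n)
    (V : Fin n → Type*)
    [∀ i, NormedAddCommGroup (V i)] [∀ i, InnerProductSpace ℝ (V i)]
    [∀ i, CompleteSpace (V i)]
    (E : U →L[ℝ] H) (D : U →L[ℝ] Q) (Dv : ∀ i, V i →L[ℝ] Q)
    (lam L cK : ℝ) (Rinv : Fin n → ℝ)
    (hlam : 0 < lam) (hL : 0 < L) (hRinv : ∀ i, 0 < Rinv i) (hcK : 0 < cK)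
    (M : Matrix (Fin n) (Fin n) ℝ) (hM : M.PosSemidef)
    (hKorn : ∀ w : U, cK * ‖D w‖ ≤ ‖E w‖)
    (eu : ℕ → U) (ev : ℕ → ∀ i, V i) (ep : ℕ → Fin n → Q)
    (heq1 : ∀ (m : ℕ) (q : Fin n → Q),
      -(∑ i, ⟪Dv i (ev (m + 1) i), q i⟫)
          - ∑ i, ∑ j, M i j * ⟪ep (m + 1) j, q i⟫
          - L * ⟪∑ j, ep (m + 1) j, ∑ i, q i⟫
        = -(L * ⟪∑ j, ep m j, ∑ i, q i⟫) + ⟪D (eu m), ∑ i, q i⟫)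
    (heq2 : ∀ (m : ℕ) (z : ∀ i, V i),
      ∑ i, Rinv i * ⟪ev (m + 1) i, z i⟫ - ∑ i, ⟪ep (m + 1) i, Dv i (z i)⟫ = 0)
    (heq3 : ∀ (m : ℕ) (w : U),
      ⟪E (eu m), E w⟫ + lam * ⟪D (eu m), D w⟫ = ⟪∑ i, ep m i, D w⟫)
    (hLge : 1 / (lam + cK ^ 2) ≤ L)
    (βs : ℝ) (hβs : 0 < βs)
    (hinfsup : ∀ s : Q, ∃ w : U, D w = s ∧ ‖E w‖ ≤ βs⁻¹ * ‖s‖)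
    (ρ2 : ℝ) (hρ2 : ρ2 = 1 / (L⁻¹ / ((βs ^ 2)⁻¹ + lam) + 1))
    (g : ℕ → Q)
    (hg : ∀ m : ℕ, g m = -(L • ∑ i, ep m i) + D (eu m) - D (eu (m + 1))) :
    ∀ m : ℕ, ‖g m‖ ≤ 3 * L * Real.sqrt ρ2 ^ m * ‖∑ i, ep 0 i‖ := by
  -- notation
  set s : ℕ → Q := fun m => ∑ i, ep m i with hs
  set aq : U → U → ℝ := fun u w => ⟪E u, E w⟫ + lam * ⟪D u, D w⟫ with haq
  have h3 : ∀ (m : ℕ) (w : U), aq (eu m) w = ⟪s m, D w⟫ := by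
    intro m w
    simp only [haq, hs]
    exact heq3 m w
  have hlamcK : 0 < lam + cK ^ 2 := by positivity
  have hLK : 1 ≤ L * (lam + cK ^ 2) := by
    rw [div_le_iff₀ hlamcK] at hLge; linarith
  -- coercivity of aq on the range-norm
  have haqself : ∀ u : U, aq u u = ‖E u‖ ^ 2 + lam * ‖D u‖ ^ 2 := by
    intro u; simp [haq, real_inner_self_eq_norm_sq]
  have hcoer : ∀ u : U, (cK ^ 2 + lam) * ‖D u‖ ^ 2 ≤ aq u u := by
    intro u
    have h1 := hKorn u
    have h2 : (cK * ‖D u‖) ^ 2 ≤ ‖E u‖ ^ 2 := by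
      have := mul_self_le_mul_self (by positivity) h1
      nlinarith
    rw [haqself]; nlinarith
  have haq_nonneg : ∀ u : U, 0 ≤ aq u u := by
    intro u; rw [haqself]; positivity
  -- key bound from the elasticity equation
  have hkey : ∀ (u : U) (t : Q), (∀ w : U, aq u w = ⟪t, D w⟫) →
      ‖D u‖ ≤ L * ‖t‖ ∧ aq u u ≤ L * ‖t‖ ^ 2 := by
    intro u t ht
    have h0 : aq u u ≤ ‖t‖ * ‖D u‖ := by
      rw [ht u]; exact real_inner_le_norm _ _
    have hDn : ‖D u‖ ≤ L * ‖t‖ := by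
      rcases eq_or_lt_of_le (norm_nonneg (D u)) with h | h
      · rw [← h]; positivity
      · have hc := hcoer u
        have h1 : (cK ^ 2 + lam) * ‖D u‖ ^ 2 ≤ ‖t‖ * ‖D u‖ := le_trans hc h0
        have h2 : (cK ^ 2 + lam) * ‖D u‖ ≤ ‖t‖ := by
          have := (mul_le_mul_iff_of_pos_right h).mp (by nlinarith : ((cK ^ 2 + lam) * ‖D u‖) * ‖D u‖ ≤ ‖t‖ * ‖D u‖)
          exact this
        nlinarith [norm_nonneg (D u)]
    refine ⟨hDn, ?_⟩
    calc aq u u ≤ ‖t‖ * ‖D u‖ := h0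
      _ ≤ ‖t‖ * (L * ‖t‖) := by
          exact mul_le_mul_of_nonneg_left hDn (norm_nonneg t)
      _ = L * ‖t‖ ^ 2 := by ring
  -- Cauchy–Schwarz for aq
  have hCS : ∀ u w : U, (aq u w) ^ 2 ≤ aq u u * aq w w := by
    intro u w
    have h1 : |⟪E u, E w⟫| ≤ ‖E u‖ * ‖E w‖ := abs_real_inner_le_norm _ _
    have h2 : |⟪D u, D w⟫| ≤ ‖D u‖ * ‖D w‖ := abs_real_inner_le_norm _ _
    have hx2 : ⟪E u, E w⟫ ^ 2 ≤ (‖E u‖ * ‖E w‖) ^ 2 := by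
      rw [← sq_abs]
      exact pow_le_pow_left₀ (abs_nonneg _) h1 2
    have hy2 : ⟪D u, D w⟫ ^ 2 ≤ (‖D u‖ * ‖D w‖) ^ 2 := by
      rw [← sq_abs]
      exact pow_le_pow_left₀ (abs_nonneg _) h2 2
    have hxy : ⟪E u, E w⟫ * ⟪D u, D w⟫ ≤ (‖E u‖ * ‖E w‖) * (‖D u‖ * ‖D w‖) := by
      calc ⟪E u, E w⟫ * ⟪D u, D w⟫ ≤ |⟪E u, E w⟫ * ⟪D u, D w⟫| := le_abs_self _
        _ = |⟪E u, E w⟫| * |⟪D u, D w⟫| := abs_mul _ _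
        _ ≤ (‖E u‖ * ‖E w‖) * (‖D u‖ * ‖D w‖) :=
            mul_le_mul h1 h2 (abs_nonneg _) (by positivity)
    rw [haqself, haqself]
    simp only [haq]
    nlinarith [hx2, mul_le_mul_of_nonneg_left hy2 (sq_nonneg lam),
      mul_le_mul_of_nonneg_left hxy hlam.le,
      mul_nonneg hlam.le (sq_nonneg (‖E u‖ * ‖D w‖ - ‖D u‖ * ‖E w‖))]
  -- inf-sup lower bound: ‖s m‖² ≤ K * b m with K = (βs²)⁻¹ + lam, b m := aq (eu m) (eu m)
  set K : ℝ := (βs ^ 2)⁻¹ + lam with hK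
  have hKpos : 0 < K := by positivity
  have hinf : ∀ m : ℕ, ‖s m‖ ^ 2 ≤ K * aq (eu m) (eu m) := by
    intro m
    obtain ⟨w, hw1, hw2⟩ := hinfsup (s m)
    have h1 : aq (eu m) w = ‖s m‖ ^ 2 := by
      rw [h3 m w, hw1, real_inner_self_eq_norm_sq]
    have haww : aq w w ≤ K * ‖s m‖ ^ 2 := by
      rw [haqself, hw1]
      have h2 : ‖E w‖ ^ 2 ≤ (βs⁻¹ * ‖s m‖) ^ 2 := by
        have := mul_self_le_mul_self (norm_nonneg _) hw2
        nlinarith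
      have h3' : (βs⁻¹ * ‖s m‖) ^ 2 = (βs ^ 2)⁻¹ * ‖s m‖ ^ 2 := by
        rw [mul_pow]; congr 1; rw [← inv_pow]
      rw [hK]; nlinarith
    have hcs := hCS (eu m) w
    rw [h1] at hcs
    rcases ((norm_nonneg (s m)).eq_or_lt.imp Eq.symm id) with h | h
    · rw [h]
      simpa using mul_nonneg hKpos.le (haq_nonneg (eu m))
    · have hsq : 0 < ‖s m‖ ^ 2 := by positivity
      have h4 : (‖s m‖ ^ 2) * (‖s m‖ ^ 2) ≤ (K * aq (eu m) (eu m)) * ‖s m‖ ^ 2 := by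
        calc (‖s m‖ ^ 2) * (‖s m‖ ^ 2) = (‖s m‖ ^ 2) ^ 2 := by ring
          _ ≤ aq (eu m) (eu m) * aq w w := hcs
          _ ≤ aq (eu m) (eu m) * (K * ‖s m‖ ^ 2) :=
              mul_le_mul_of_nonneg_left haww (haq_nonneg _)
          _ = (K * aq (eu m) (eu m)) * ‖s m‖ ^ 2 := by ring
      exact le_of_mul_le_mul_right h4 hsq
  -- the main energy inequality
  have hmain : ∀ m : ℕ, L * ‖s (m + 1)‖ ^ 2 + aq (eu (m + 1)) (eu (m + 1)) ≤ L * ‖s m‖ ^ 2 := by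
    intro m
    -- nonnegativity of the flux term
    have hR : 0 ≤ ∑ i, ⟪Dv i (ev (m + 1) i), ep (m + 1) i⟫ := by
      have h2 := heq2 m (ev (m + 1))
      have : ∑ i, ⟪Dv i (ev (m + 1) i), ep (m + 1) i⟫
          = ∑ i, Rinv i * ⟪ev (m + 1) i, ev (m + 1) i⟫ := by
        rw [← sub_eq_zero]
        rw [← neg_eq_zero, neg_sub]
        rw [← h2]
        congr 1
        exact Finset.sum_congr rfl fun i _ => real_inner_comm _ _
      rw [this]
      exact Finset.sum_nonneg fun i _ =>
        mul_nonneg (hRinv i).le real_inner_self_nonneg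
    have hMt : 0 ≤ ∑ i, ∑ j, M i j * ⟪ep (m + 1) j, ep (m + 1) i⟫ :=
      psd_inner_quadratic_nonneg M hM (ep (m + 1))
    have h1 := heq1 m (ep (m + 1))
    have hδ : ⟪D (eu m), s (m + 1)⟫ = aq (eu (m + 1)) (eu m) := by
      rw [h3 (m + 1) (eu m), real_inner_comm]
    have hsnorm : ⟪(∑ j, ep (m + 1) j : Q), ∑ i, ep (m + 1) i⟫ = ‖s (m + 1)‖ ^ 2 := by
      rw [hs]; exact real_inner_self_eq_norm_sq _
    have hcross : ⟪(∑ j, ep m j : Q), ∑ i, ep (m + 1) i⟫ = ⟪s m, s (m + 1)⟫ := rfl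
    rw [hsnorm, hcross] at h1
    have hδ' : ⟪D (eu m), ∑ i, ep (m + 1) i⟫ = aq (eu (m + 1)) (eu m) := hδ
    rw [hδ'] at h1
    -- h1 : -(Rterm) - Mterm - L‖s(m+1)‖² = -(L⟪s m, s(m+1)⟫) + aq (eu (m+1)) (eu m)
    have hstep1 : L * ‖s (m + 1)‖ ^ 2 + aq (eu (m + 1)) (eu m) ≤ L * ⟪s m, s (m + 1)⟫ := by
      linarith
    -- expansion of aq on the difference
    set d : U := eu m - eu (m + 1) with hd
    have hexp : aq d d = aq (eu m) (eu m) - 2 * aq (eu (m + 1)) (eu m)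
        + aq (eu (m + 1)) (eu (m + 1)) := by
      simp only [haq, hd, map_sub, inner_sub_left, inner_sub_right]
      rw [real_inner_comm (E (eu m)) (E (eu (m + 1))),
        real_inner_comm (D (eu m)) (D (eu (m + 1)))]
      ring
    have hdt : ∀ w : U, aq d w = ⟪s m - s (m + 1), D w⟫ := by
      intro w
      have e1 := h3 m w
      have e2 := h3 (m + 1) w
      simp only [haq, hd, map_sub, inner_sub_left]
      simp only [haq] at e1 e2
      linarith
    have hdd : aq d d ≤ L * ‖s m - s (m + 1)‖ ^ 2 := (hkey d (s m - s (m + 1)) hdt).2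
    have hnormsub : ‖s m - s (m + 1)‖ ^ 2
        = ‖s m‖ ^ 2 - 2 * ⟪s m, s (m + 1)⟫ + ‖s (m + 1)‖ ^ 2 := norm_sub_sq_real _ _
    have hbm := haq_nonneg (eu m)
    have hdd' : aq d d ≤ L * (‖s m‖ ^ 2 - 2 * ⟪s m, s (m + 1)⟫ + ‖s (m + 1)‖ ^ 2) := by
      rw [← hnormsub]; exact hdd
    have hdd'' : aq d d ≤ L * ‖s m‖ ^ 2 - 2 * (L * ⟪s m, s (m + 1)⟫)
        + L * ‖s (m + 1)‖ ^ 2 := by linarith [hdd', (by ring :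
          L * (‖s m‖ ^ 2 - 2 * ⟪s m, s (m + 1)⟫ + ‖s (m + 1)‖ ^ 2)
            = L * ‖s m‖ ^ 2 - 2 * (L * ⟪s m, s (m + 1)⟫) + L * ‖s (m + 1)‖ ^ 2)]
    -- combine
    linarith [hstep1, hexp, hdd'', hbm]
  -- contraction per step
  have hρ2pos : 0 < ρ2 := by
    rw [hρ2]
    have : 0 < L⁻¹ / K + 1 := by positivity
    positivity
  have hρ2le1 : ρ2 ≤ 1 := by
    rw [hρ2]
    rw [div_le_one (by positivity)]
    have : 0 ≤ L⁻¹ / K := by positivity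
    linarith
  set ρ : ℝ := Real.sqrt ρ2 with hρ
  have hρ_nonneg : 0 ≤ ρ := Real.sqrt_nonneg _
  have hρ_le1 : ρ ≤ 1 := by
    rw [hρ]
    rw [show (1:ℝ) = Real.sqrt 1 from (Real.sqrt_one).symm]
    exact Real.sqrt_le_sqrt hρ2le1
  have hstep : ∀ m : ℕ, ‖s (m + 1)‖ ≤ ρ * ‖s m‖ := by
    intro m
    have hb := hinf (m + 1)
    have hm := hmain m
    -- (L + K⁻¹) ‖s(m+1)‖² ≤ L ‖s m‖²
    have hd2 : (0:ℝ) < L + K⁻¹ := by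
      have := inv_pos.mpr hKpos
      linarith
    have h1 : (L + K⁻¹) * ‖s (m + 1)‖ ^ 2 ≤ L * ‖s m‖ ^ 2 := by
      have h2 : K⁻¹ * ‖s (m + 1)‖ ^ 2 ≤ aq (eu (m + 1)) (eu (m + 1)) := by
        have h2' := mul_le_mul_of_nonneg_left hb (inv_nonneg.mpr hKpos.le)
        rwa [inv_mul_cancel_left₀ hKpos.ne'] at h2'
      calc (L + K⁻¹) * ‖s (m + 1)‖ ^ 2
          = L * ‖s (m + 1)‖ ^ 2 + K⁻¹ * ‖s (m + 1)‖ ^ 2 := by ring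
        _ ≤ L * ‖s (m + 1)‖ ^ 2 + aq (eu (m + 1)) (eu (m + 1)) := by
            exact add_le_add_right h2 _
        _ ≤ L * ‖s m‖ ^ 2 := hm
    have hρ2eq : ρ2 = L / (L + K⁻¹) := by
      have hd1 : (0:ℝ) < L⁻¹ / K + 1 := by
        have : (0:ℝ) ≤ L⁻¹ / K := div_nonneg (inv_nonneg.mpr hL.le) hKpos.le
        linarith
      rw [hρ2, div_eq_div_iff hd1.ne' hd2.ne']
      field_simp
      ring
    have h3' : ‖s (m + 1)‖ ^ 2 ≤ ρ2 * ‖s m‖ ^ 2 := by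
      rw [hρ2eq]
      rw [div_mul_eq_mul_div, le_div_iff₀ hd2]
      nlinarith
    have h4 := Real.sqrt_le_sqrt h3'
    rwa [Real.sqrt_mul hρ2pos.le, Real.sqrt_sq (norm_nonneg _),
      Real.sqrt_sq (norm_nonneg _)] at h4
  have hdecay : ∀ m : ℕ, ‖s m‖ ≤ ρ ^ m * ‖s 0‖ := by
    intro m
    induction m with
    | zero => simp
    | succ k ih =>
        calc ‖s (k + 1)‖ ≤ ρ * ‖s k‖ := hstep k
          _ ≤ ρ * (ρ ^ k * ‖s 0‖) := mul_le_mul_of_nonneg_left ih hρ_nonneg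
          _ = ρ ^ (k + 1) * ‖s 0‖ := by ring
  -- displacement bounds
  have hDbound : ∀ m : ℕ, ‖D (eu m)‖ ≤ L * ‖s m‖ := fun m =>
    (hkey (eu m) (s m) (h3 m)).1
  -- conclude
  intro m
  have hgm : ‖g m‖ ≤ L * ‖s m‖ + ‖D (eu m)‖ + ‖D (eu (m + 1))‖ := by
    rw [hg m]
    calc ‖-(L • s m) + D (eu m) - D (eu (m + 1))‖
        ≤ ‖-(L • s m) + D (eu m)‖ + ‖D (eu (m + 1))‖ := norm_sub_le _ _
      _ ≤ ‖-(L • s m)‖ + ‖D (eu m)‖ + ‖D (eu (m + 1))‖ := by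
          have := norm_add_le (-(L • s m)) (D (eu m))
          linarith
      _ = L * ‖s m‖ + ‖D (eu m)‖ + ‖D (eu (m + 1))‖ := by
          rw [norm_neg, norm_smul, Real.norm_eq_abs, abs_of_pos hL]
  have hsm1 : ‖s (m + 1)‖ ≤ ‖s m‖ := by
    calc ‖s (m + 1)‖ ≤ ρ * ‖s m‖ := hstep m
      _ ≤ 1 * ‖s m‖ := mul_le_mul_of_nonneg_right hρ_le1 (norm_nonneg _)
      _ = ‖s m‖ := one_mul _
  have h5 : ‖g m‖ ≤ 3 * L * ‖s m‖ := by
    have h6 := hDbound m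
    have h7 := hDbound (m + 1)
    have h8 : ‖D (eu (m + 1))‖ ≤ L * ‖s m‖ := by
      calc ‖D (eu (m + 1))‖ ≤ L * ‖s (m + 1)‖ := h7
        _ ≤ L * ‖s m‖ := mul_le_mul_of_nonneg_left hsm1 hL.le
    linarith
  calc ‖g m‖ ≤ 3 * L * ‖s m‖ := h5
    _ ≤ 3 * L * (ρ ^ m * ‖s 0‖) :=
        mul_le_mul_of_nonneg_left (hdecay m) (by positivity)
    _ = 3 * L * ρ ^ m * ‖s 0‖ := by ring
end

section
/- In the fixed-stress error framework (continuous), assume additionally: (a) there is β_s > 0 such that for every s ∈ Q there exists w ∈ U with D w = s and ‖E w‖ ≤ β_s⁻¹ ‖s‖; (b) L ≥ 1/(λ + c_K²). Set λ₀ := max{1, λ}, R := min{R₁, …, Rₙ}, Λ_e := M + R·I + (1/λ₀ + L)·J ∈ ℝ^{n×n} (I the identity, J the all-ones matrix), ρ² := 1/(L⁻¹/(β_s⁻² + λ) + 1), and define, for u ∈ U, v ∈ V₁ × … × Vₙ and p ∈ Qⁿ: ‖u‖_U² := ‖E u‖² + λ‖D u‖², ‖v‖_{V_e}² := Σᵢ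 Rᵢ⁻¹ ‖vᵢ‖² + Σᵢ,ⱼ (Λ_e⁻¹)ᵢⱼ ⟨Dⱼ vⱼ, Dᵢ vᵢ⟩, ‖p‖_{P_e}² := Σᵢ,ⱼ (Λ_e)ᵢⱼ ⟨pⱼ, pᵢ⟩. Assume also: (c) stability hypothesis: there is C₁ > 0 such that whenever g ∈ Q and (x_u, x_v, x_p) ∈ U × (V₁ × … × Vₙ) × Qⁿ satisfy ⟨E x_u, E w⟩ + λ⟨D x_u, D w⟩ − ⟨Σᵢ x_{p,i}, D w⟩ = 0 for all w ∈ U, Σᵢ Rᵢ⁻¹⟨x_{v,i}, zᵢ⟩ − Σᵢ⟨x_{p,i}, Dᵢ zᵢ⟩ = 0 for all (z₁, …, zₙ) ∈ V₁ × … × Vₙ, and −⟨D x_u, Σᵢ qᵢ⟩ − Σᵢ⟨Dᵢ x_{v,i}, qᵢ⟩ − Σᵢ,ⱼ (M + L·J)ᵢⱼ ⟨x_{p,j}, qᵢ⟩ = ⟨g, Σᵢ qᵢ⟩ for all (q₁, …, qₙ) ∈ Qⁿ, then ‖x_u‖_U + ‖x_v‖_{V_e} + ‖x_p‖_{P_e}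 ≤ C₁ (Σᵢ,ⱼ (Λ_e⁻¹)ᵢⱼ)^{1/2} ‖g‖. Then for every m ≥ 0: ‖e_v^{m+1}‖_{V_e} + ‖e_p^{m+1}‖_{P_e} ≤ 3 C₁ √L ρ^m ‖Σᵢ e_{p,i}^0‖. -/
open scoped RealInnerProductSpace
open Matrix

open scoped MatrixOrder in
lemma aux_psd_form {Q : Type*} [NormedAddCommGroup Q] [InnerProductSpace ℝ Q]
    {n : ℕ} (M : Matrix (Fin n) (Fin n) ℝ) (hM : M.PosSemidef) (p : Fin n → Q) :
    0 ≤ ∑ i, ∑ j, M i j * ⟪p j, p i⟫ := by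
  have hS : (CFC.sqrt M).PosSemidef := (CFC.sqrt_nonneg M).posSemidef
  have hmul : CFC.sqrt M * CFC.sqrt M = M := CFC.sqrt_mul_sqrt_self M hM.nonneg
  set S := CFC.sqrt M with hSdef
  have hsym : ∀ i j, S i j = S j i := fun i j => by
    have := hS.1.apply j i; simpa using this
  have key : ∑ i, ∑ j, M i j * ⟪p j, p i⟫
      = ∑ k, ⟪∑ j, S k j • p j, ∑ i, S k i • p i⟫ := by
    calc ∑ i, ∑ j, M i j * ⟪p j, p i⟫
        = ∑ i, ∑ j, ∑ k, S k i * S k j * ⟪p j, p i⟫ := by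
          refine Finset.sum_congr rfl fun i _ => Finset.sum_congr rfl fun j _ => ?_
          rw [← hmul, Matrix.mul_apply, Finset.sum_mul]
          exact Finset.sum_congr rfl fun k _ => by rw [hsym i k]
      _ = ∑ i, ∑ k, ∑ j, S k i * S k j * ⟪p j, p i⟫ :=
          Finset.sum_congr rfl fun i _ => Finset.sum_comm
      _ = ∑ k, ∑ i, ∑ j, S k i * S k j * ⟪p j, p i⟫ := Finset.sum_comm
      _ = ∑ k, ⟪∑ j, S k j • p j, ∑ i, S k i • p i⟫ := by
          refine Finset.sum_congr rfl fun k _ => ?_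
          rw [inner_sum]
          refine (Finset.sum_congr rfl fun i _ => ?_).symm
          rw [real_inner_smul_right, sum_inner, Finset.mul_sum]
          refine Finset.sum_congr rfl fun j _ => ?_
          rw [real_inner_smul_left]; ring
  rw [key]
  exact Finset.sum_nonneg fun k _ => real_inner_self_nonneg

lemma aux_inv_sum {n : ℕ} (A : Matrix (Fin n) (Fin n) ℝ) (hA : A.PosDef) {c : ℝ} (hc : 0 < c)
    (hlow : ∀ x : Fin n → ℝ, c * (∑ i, x i) ^ 2 ≤ x ⬝ᵥ (A *ᵥ x)) :
    ∑ i, ∑ j, A⁻¹ i j ≤ 1 / c := by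
  have hu : IsUnit A.det := hA.det_pos.ne'.isUnit
  have hinv : A * A⁻¹ = 1 := A.mul_nonsing_inv hu
  set y : Fin n → ℝ := A⁻¹ *ᵥ (fun _ => 1) with hy
  have hAy : A *ᵥ y = fun _ => 1 := by
    rw [hy, Matrix.mulVec_mulVec, hinv, Matrix.one_mulVec]
  have hsum : ∑ i, ∑ j, A⁻¹ i j = ∑ i, y i := by
    simp [hy, Matrix.mulVec, dotProduct]
  have ht : y ⬝ᵥ (A *ᵥ y) = ∑ i, y i := by
    simp [hAy, dotProduct]
  have h1 : c * (∑ i, y i) ^ 2 ≤ ∑ i, y i := by have := hlow y; rwa [ht] at this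
  rw [hsum]
  rw [div_eq_inv_mul, mul_one]
  rcases le_or_gt (∑ i, y i) 0 with h | h
  · exact h.trans (inv_nonneg.2 hc.le)
  · have hc' : c * c⁻¹ = 1 := mul_inv_cancel₀ hc.ne'
    nlinarith [h1, hc, h, hc', mul_pos hc h]

lemma aux_eta (L A ρ2 σ a y : ℝ) (hL : 0 < L) (ha : 0 ≤ a)
    (hρle : ρ2 ≤ 1) (hkey : (1 - ρ2) * (L * A) = ρ2)
    (h1 : σ ^ 2 ≤ A * a) (h2 : y ^ 2 ≤ L * a) :
    L ^ 2 * σ ^ 2 - 2 * L * a + y ^ 2 ≤ ρ2 * (L * σ) ^ 2 := by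
  have e1 : (1 - ρ2) * L ^ 2 * σ ^ 2 ≤ (1 - ρ2) * L ^ 2 * (A * a) :=
    mul_le_mul_of_nonneg_left h1 (mul_nonneg (sub_nonneg.2 hρle) (sq_nonneg L))
  have e2 : (1 - ρ2) * L ^ 2 * (A * a) = ρ2 * (L * a) := by
    linear_combination (L * a) * hkey
  have e3 : ρ2 * (L * a) ≤ L * a := by
    nlinarith [mul_nonneg hL.le ha]
  nlinarith [e1, e2, e3, h2]

lemma aux_div (L r σ t : ℝ) (hL : 0 < L) (ht : 0 < t)
    (h4 : L * t ^ 2 ≤ r * (L * σ) * t) : t ≤ r * σ := by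
  have h1 : (L * t) * t ≤ (L * (r * σ)) * t := by nlinarith
  have h2 : L * t ≤ L * (r * σ) := le_of_mul_le_mul_right h1 ht
  exact le_of_mul_le_mul_left h2 hL

lemma aux_lambda_sum {n : ℕ} (Mt : Matrix (Fin n) (Fin n) ℝ) (hM : Mt.PosSemidef)
    {R c L : ℝ} (hR : 0 < R) (hc : 0 < c) (hL : 0 < L) (hcL : L ≤ c)
    (Λe : Matrix (Fin n) (Fin n) ℝ)
    (hΛe : Λe = Mt + R • (1 : Matrix (Fin n) (Fin n) ℝ) + c • Matrix.of fun _ _ => (1:ℝ)) :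
    ∑ i, ∑ j, Λe⁻¹ i j ≤ 1 / L := by
  have hMx : ∀ x : Fin n → ℝ, 0 ≤ dotProduct x (Mt *ᵥ x) := by
    intro x
    simpa using hM.dotProduct_mulVec_nonneg x
  have hquad : ∀ x : Fin n → ℝ, dotProduct x (Λe *ᵥ x)
      = dotProduct x (Mt *ᵥ x) + R * (∑ i, x i * x i)
        + c * (∑ i, x i) ^ 2 := by
    intro x
    have t1 : dotProduct x ((R • (1 : Matrix (Fin n) (Fin n) ℝ)) *ᵥ x)
        = R * ∑ i, x i * x i := by
      rw [Matrix.smul_mulVec, Matrix.one_mulVec, dotProduct_smul]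
      simp [dotProduct, Finset.mul_sum]
    have t2 : dotProduct x ((c • (Matrix.of fun _ _ => (1:ℝ))) *ᵥ x)
        = c * (∑ i, x i) ^ 2 := by
      rw [Matrix.smul_mulVec, dotProduct_smul]
      have hJ : (Matrix.of fun _ _ => (1:ℝ) : Matrix (Fin n) (Fin n) ℝ) *ᵥ x = fun _ => ∑ j, x j := by
        ext i
        simp [Matrix.mulVec, dotProduct]
      rw [hJ]
      have h2 : dotProduct x (fun _ => ∑ j, x j) = (∑ j, x j) ^ 2 := by
        simp [dotProduct, ← Finset.sum_mul, sq]
      rw [h2]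
      simp
    rw [hΛe, Matrix.add_mulVec, dotProduct_add, Matrix.add_mulVec,
      dotProduct_add, t1, t2]
  have hJh : (Matrix.of fun _ _ => (1:ℝ) : Matrix (Fin n) (Fin n) ℝ).IsHermitian := by
    ext i j
    simp [Matrix.conjTranspose_apply]
  have hpd : Λe.PosDef := by
    refine Matrix.PosDef.of_dotProduct_mulVec_pos ?_ ?_
    · rw [hΛe]
      have h1 : (R • (1 : Matrix (Fin n) (Fin n) ℝ)).IsHermitian := by
        ext i j
        simp [Matrix.conjTranspose_apply, Matrix.one_apply, eq_comm]
      have h2 : (c • (Matrix.of fun _ _ => (1:ℝ)) : Matrix (Fin n) (Fin n) ℝ).IsHermitian := by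
        ext i j
        simp [Matrix.conjTranspose_apply]
      exact (hM.1.add h1).add h2
    · intro x hx
      have hxx : 0 < ∑ i, x i * x i := by
        obtain ⟨i, hi⟩ := Function.ne_iff.1 hx
        exact Finset.sum_pos' (fun j _ => mul_self_nonneg _)
          ⟨i, Finset.mem_univ i, mul_self_pos.2 hi⟩
      have h0 : 0 < dotProduct x (Λe *ᵥ x) := by
        rw [hquad x]
        nlinarith [hMx x, sq_nonneg (∑ i, x i), hR, hc]
      simpa using h0
  have hlow : ∀ x : Fin n → ℝ,
      c * (∑ i, x i) ^ 2 ≤ dotProduct x (Λe *ᵥ x) := by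
    intro x
    rw [hquad x]
    have h1 := hMx x
    have h2 : 0 ≤ ∑ i, x i * x i :=
      Finset.sum_nonneg fun i _ => mul_self_nonneg _
    nlinarith [hR]
  calc ∑ i, ∑ j, Λe⁻¹ i j ≤ 1 / c := aux_inv_sum Λe hpd hc hlow
    _ ≤ 1 / L := one_div_le_one_div_of_le hL hcL

set_option maxHeartbeats 1000000 in
/-- Flux–pressure estimate (error_ev_ep) of Theorem 3: under the abstract Stokes inf-sup
condition, L ≥ 1/(λ + c_K²) and the parameter-robust stability hypothesis for the shifted
MPET system, the flux and pressure errors decay geometrically in the parameter-dependent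
norms ‖·‖_{V_e}, ‖·‖_{P_e}:
‖e_v^{m+1}‖_{V_e} + ‖e_p^{m+1}‖_{P_e} ≤ 3 C₁ √L ρ^m ‖Σᵢ e_{p,i}^0‖. -/
theorem fixed_stress_flux_pressure_decay
    {U H Q : Type*}
    [NormedAddCommGroup U] [InnerProductSpace ℝ U] [CompleteSpace U]
    [NormedAddCommGroup H] [InnerProductSpace ℝ H] [CompleteSpace H]
    [NormedAddCommGroup Q] [InnerProductSpace ℝ Q] [CompleteSpace Q]
    (n : ℕ) (hn : 1 ≤ n)
    (V : Fin n → Type*)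
    [∀ i, NormedAddCommGroup (V i)] [∀ i, InnerProductSpace ℝ (V i)]
    [∀ i, CompleteSpace (V i)]
    (E : U →L[ℝ] H) (D : U →L[ℝ] Q) (Dv : ∀ i, V i →L[ℝ] Q)
    (lam L cK : ℝ) (Rinv : Fin n → ℝ)
    (hlam : 0 < lam) (hL : 0 < L) (hRinv : ∀ i, 0 < Rinv i) (hcK : 0 < cK)
    (M : Matrix (Fin n) (Fin n) ℝ) (hM : M.PosSemidef)
    (hKorn : ∀ w : U, cK * ‖D w‖ ≤ ‖E w‖)
    (eu : ℕ → U) (ev : ℕ → ∀ i, V i) (ep : ℕ → Fin n → Q)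
    (heq1 : ∀ (m : ℕ) (q : Fin n → Q),
      -(∑ i, ⟪Dv i (ev (m + 1) i), q i⟫)
          - ∑ i, ∑ j, M i j * ⟪ep (m + 1) j, q i⟫
          - L * ⟪∑ j, ep (m + 1) j, ∑ i, q i⟫
        = -(L * ⟪∑ j, ep m j, ∑ i, q i⟫) + ⟪D (eu m), ∑ i, q i⟫)
    (heq2 : ∀ (m : ℕ) (z : ∀ i, V i),
      ∑ i, Rinv i * ⟪ev (m + 1) i, z i⟫ - ∑ i, ⟪ep (m + 1) i, Dv i (z i)⟫ = 0)
    (heq3 : ∀ (m : ℕ) (w : U),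
      ⟪E (eu m), E w⟫ + lam * ⟪D (eu m), D w⟫ = ⟪∑ i, ep m i, D w⟫)
    (hLge : 1 / (lam + cK ^ 2) ≤ L)
    (βs : ℝ) (hβs : 0 < βs)
    (hinfsup : ∀ s : Q, ∃ w : U, D w = s ∧ ‖E w‖ ≤ βs⁻¹ * ‖s‖)
    (lam0 : ℝ) (hlam0 : lam0 = max 1 lam)
    (R : ℝ) (hRmin : IsLeast (Set.range fun i => (Rinv i)⁻¹) R)
    (Λe : Matrix (Fin n) (Fin n) ℝ)
    (hΛe : Λe = M + R • (1 : Matrix (Fin n) (Fin n) ℝ)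
      + (1 / lam0 + L) • Matrix.of fun _ _ => (1 : ℝ))
    (ρ2 : ℝ) (hρ2 : ρ2 = 1 / (L⁻¹ / ((βs ^ 2)⁻¹ + lam) + 1))
    (nU : U → ℝ) (hnU : ∀ u : U, nU u = Real.sqrt (‖E u‖ ^ 2 + lam * ‖D u‖ ^ 2))
    (nVe : (∀ i, V i) → ℝ)
    (hnVe : ∀ v : ∀ i, V i, nVe v = Real.sqrt (∑ i, Rinv i * ‖v i‖ ^ 2
      + ∑ i, ∑ j, Λe⁻¹ i j * ⟪Dv j (v j), Dv i (v i)⟫))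
    (nPe : (Fin n → Q) → ℝ)
    (hnPe : ∀ p : Fin n → Q, nPe p = Real.sqrt (∑ i, ∑ j, Λe i j * ⟪p j, p i⟫))
    (C1 : ℝ) (hC1 : 0 < C1)
    (hstab : ∀ (g : Q) (xu : U) (xv : ∀ i, V i) (xp : Fin n → Q),
      (∀ w : U, ⟪E xu, E w⟫ + lam * ⟪D xu, D w⟫ - ⟪∑ i, xp i, D w⟫ = 0) →
      (∀ z : ∀ i, V i,
        ∑ i, Rinv i * ⟪xv i, z i⟫ - ∑ i, ⟪xp i, Dv i (z i)⟫ = 0) →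
      (∀ q : Fin n → Q,
        -⟪D xu, ∑ i, q i⟫ - ∑ i, ⟪Dv i (xv i), q i⟫
            - ∑ i, ∑ j, ((M + L • Matrix.of fun _ _ => (1 : ℝ) : Matrix (Fin n) (Fin n) ℝ)) i j * ⟪xp j, q i⟫
          = ⟪g, ∑ i, q i⟫) →
      nU xu + nVe xv + nPe xp ≤ C1 * Real.sqrt (∑ i, ∑ j, Λe⁻¹ i j) * ‖g‖) :
    ∀ m : ℕ,
      nVe (ev (m + 1)) + nPe (ep (m + 1))
        ≤ 3 * C1 * Real.sqrt L * Real.sqrt ρ2 ^ m * ‖∑ i, ep 0 i‖ := by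
  -- abbreviations
  have hA : (0:ℝ) < (βs ^ 2)⁻¹ + lam := by positivity
  have hLK : 1 ≤ L * (lam + cK ^ 2) := by
    rw [div_le_iff₀ (by positivity)] at hLge; linarith
  -- energy identity
  have ha_eq : ∀ m : ℕ, ⟪∑ i, ep m i, D (eu m)⟫
      = ‖E (eu m)‖ ^ 2 + lam * ‖D (eu m)‖ ^ 2 := by
    intro m
    have h := heq3 m (eu m)
    rw [real_inner_self_eq_norm_sq, real_inner_self_eq_norm_sq] at h
    linarith
  have ha_nonneg : ∀ m : ℕ, 0 ≤ ‖E (eu m)‖ ^ 2 + lam * ‖D (eu m)‖ ^ 2 := by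
    intro m; positivity
  have hKornSq : ∀ m : ℕ, cK ^ 2 * ‖D (eu m)‖ ^ 2 ≤ ‖E (eu m)‖ ^ 2 := by
    intro m
    have h := mul_self_le_mul_self (mul_nonneg hcK.le (norm_nonneg (D (eu m)))) (hKorn (eu m))
    nlinarith [h]
  have hka : ∀ m : ℕ, (lam + cK ^ 2) * ‖D (eu m)‖ ^ 2
      ≤ ‖E (eu m)‖ ^ 2 + lam * ‖D (eu m)‖ ^ 2 := by
    intro m; nlinarith [hKornSq m]
  -- bound on D eu
  have hDd : ∀ m : ℕ, ‖D (eu m)‖ ≤ L * ‖∑ i, ep m i‖ := by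
    intro m
    have h1 : (lam + cK ^ 2) * ‖D (eu m)‖ ^ 2 ≤ ‖∑ i, ep m i‖ * ‖D (eu m)‖ := by
      calc (lam + cK ^ 2) * ‖D (eu m)‖ ^ 2
          ≤ ‖E (eu m)‖ ^ 2 + lam * ‖D (eu m)‖ ^ 2 := hka m
        _ = ⟪∑ i, ep m i, D (eu m)⟫ := (ha_eq m).symm
        _ ≤ ‖∑ i, ep m i‖ * ‖D (eu m)‖ := real_inner_le_norm _ _
    nlinarith [norm_nonneg (D (eu m)), norm_nonneg (∑ i, ep m i),
      mul_nonneg (mul_nonneg hL.le (norm_nonneg (∑ i, ep m i))) (norm_nonneg (∑ i, ep m i)),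
      mul_nonneg hL.le (norm_nonneg (∑ i, ep m i))]
  have hDd2 : ∀ m : ℕ, ‖D (eu m)‖ ^ 2 ≤ L * (‖E (eu m)‖ ^ 2 + lam * ‖D (eu m)‖ ^ 2) := by
    intro m
    nlinarith [hka m, sq_nonneg (‖D (eu m)‖), mul_le_mul_of_nonneg_left (hka m) hL.le]
  -- inf-sup bound
  have hsb : ∀ m : ℕ, ‖∑ i, ep m i‖ ^ 2
      ≤ ((βs ^ 2)⁻¹ + lam) * (‖E (eu m)‖ ^ 2 + lam * ‖D (eu m)‖ ^ 2) := by
    intro m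
    obtain ⟨w, hw1, hw2⟩ := hinfsup (∑ i, ep m i)
    have h3 := heq3 m w
    rw [hw1, real_inner_self_eq_norm_sq] at h3
    have c1 : ⟪E (eu m), E w⟫ ≤ ‖E (eu m)‖ * (βs⁻¹ * ‖∑ i, ep m i‖) :=
      (real_inner_le_norm _ _).trans
        (mul_le_mul_of_nonneg_left hw2 (norm_nonneg _))
    have c2 : ⟪D (eu m), ∑ i, ep m i⟫ ≤ ‖D (eu m)‖ * ‖∑ i, ep m i‖ :=
      real_inner_le_norm _ _
    have hb : (βs ^ 2)⁻¹ = βs⁻¹ ^ 2 := by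
      rw [← inv_pow]
    rw [hb]
    nlinarith [sq_nonneg (‖∑ i, ep m i‖ - (βs⁻¹ * ‖E (eu m)‖ + lam * ‖D (eu m)‖)),
      mul_nonneg hlam.le (sq_nonneg (‖E (eu m)‖ - βs⁻¹ * ‖D (eu m)‖)),
      norm_nonneg (∑ i, ep m i), hlam]
  -- rho2 facts
  have hden : (0:ℝ) < L⁻¹ / ((βs ^ 2)⁻¹ + lam) + 1 := by positivity
  have hρ2pos : 0 < ρ2 := by rw [hρ2]; positivity
  have hρ2le : ρ2 ≤ 1 := by
    rw [hρ2]
    rw [div_le_one hden]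
    have : 0 ≤ L⁻¹ / ((βs ^ 2)⁻¹ + lam) := by positivity
    linarith
  have hkey : (1 - ρ2) * (L * ((βs ^ 2)⁻¹ + lam)) = ρ2 := by
    rw [hρ2]
    field_simp
    ring
  -- contraction
  have hcontract : ∀ m : ℕ, ‖∑ i, ep (m+1) i‖ ≤ Real.sqrt ρ2 * ‖∑ i, ep m i‖ := by
    intro m
    have hev := heq2 m (ev (m+1))
    have hev_nonneg : 0 ≤ ∑ i, ⟪Dv i (ev (m+1) i), ep (m+1) i⟫ := by
      have hcomm : ∑ i, ⟪Dv i (ev (m+1) i), ep (m+1) i⟫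
          = ∑ i, Rinv i * ⟪ev (m+1) i, ev (m+1) i⟫ := by
        have h2 : ∑ i, ⟪Dv i (ev (m+1) i), ep (m+1) i⟫
            = ∑ i, ⟪ep (m+1) i, Dv i (ev (m+1) i)⟫ :=
          Finset.sum_congr rfl fun i _ => real_inner_comm _ _
        rw [h2]; linarith
      rw [hcomm]
      exact Finset.sum_nonneg fun i _ => mul_nonneg (hRinv i).le real_inner_self_nonneg
    have hM_nonneg := aux_psd_form M hM (ep (m+1))
    have h1 := heq1 m (ep (m+1))
    rw [real_inner_self_eq_norm_sq] at h1
    have hstep : L * ‖∑ i, ep (m+1) i‖ ^ 2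
        ≤ ⟪L • (∑ i, ep m i) - D (eu m), ∑ i, ep (m+1) i⟫ := by
      have hexp : ⟪L • (∑ i, ep m i) - D (eu m), ∑ i, ep (m+1) i⟫
          = L * ⟪∑ j, ep m j, ∑ i, ep (m+1) i⟫ - ⟪D (eu m), ∑ i, ep (m+1) i⟫ := by
        rw [inner_sub_left, real_inner_smul_left]
      rw [hexp]
      linarith [h1, hev_nonneg, hM_nonneg]
    have hη : ‖L • (∑ i, ep m i) - D (eu m)‖ ^ 2 ≤ ρ2 * (L * ‖∑ i, ep m i‖) ^ 2 := by
      have hexp : ‖L • (∑ i, ep m i) - D (eu m)‖ ^ 2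
          = L ^ 2 * ‖∑ i, ep m i‖ ^ 2 - 2 * L * ⟪∑ i, ep m i, D (eu m)⟫
            + ‖D (eu m)‖ ^ 2 := by
        rw [norm_sub_sq_real, real_inner_smul_left, norm_smul,
          Real.norm_eq_abs, abs_of_pos hL]
        ring
      rw [hexp, ha_eq m]
      exact aux_eta L ((βs ^ 2)⁻¹ + lam) ρ2 _ _ _ hL (ha_nonneg m) hρ2le hkey
        (hsb m) (hDd2 m)
    have hsnn : 0 ≤ L * ‖∑ i, ep m i‖ := mul_nonneg hL.le (norm_nonneg _)
    have hηn : ‖L • (∑ i, ep m i) - D (eu m)‖ ≤ Real.sqrt ρ2 * (L * ‖∑ i, ep m i‖) := by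
      have h := Real.sqrt_le_sqrt hη
      rwa [Real.sqrt_sq (norm_nonneg _), Real.sqrt_mul hρ2pos.le,
        Real.sqrt_sq hsnn] at h
    have hCS := real_inner_le_norm (L • (∑ i, ep m i) - D (eu m)) (∑ i, ep (m+1) i)
    by_cases hz : ‖∑ i, ep (m+1) i‖ = 0
    · rw [hz]
      positivity
    · have hz' : 0 < ‖∑ i, ep (m+1) i‖ := lt_of_le_of_ne (norm_nonneg _) (Ne.symm hz)
      have h4 : L * ‖∑ i, ep (m+1) i‖ ^ 2
          ≤ Real.sqrt ρ2 * (L * ‖∑ i, ep m i‖) * ‖∑ i, ep (m+1) i‖ :=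
        calc L * ‖∑ i, ep (m+1) i‖ ^ 2
            ≤ ⟪L • (∑ i, ep m i) - D (eu m), ∑ i, ep (m+1) i⟫ := hstep
          _ ≤ ‖L • (∑ i, ep m i) - D (eu m)‖ * ‖∑ i, ep (m+1) i‖ := hCS
          _ ≤ Real.sqrt ρ2 * (L * ‖∑ i, ep m i‖) * ‖∑ i, ep (m+1) i‖ :=
              mul_le_mul_of_nonneg_right hηn (norm_nonneg _)
      exact aux_div L (Real.sqrt ρ2) _ _ hL hz' h4
  have hsq0 : 0 ≤ Real.sqrt ρ2 := Real.sqrt_nonneg _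
  have hsq1 : Real.sqrt ρ2 ≤ 1 := by
    rw [show (1:ℝ) = Real.sqrt 1 by simp]
    exact Real.sqrt_le_sqrt hρ2le
  have hdecay : ∀ m : ℕ, ‖∑ i, ep m i‖ ≤ Real.sqrt ρ2 ^ m * ‖∑ i, ep 0 i‖ := by
    intro m
    induction m with
    | zero => simp
    | succ k ih =>
      calc ‖∑ i, ep (k+1) i‖ ≤ Real.sqrt ρ2 * ‖∑ i, ep k i‖ := hcontract k
        _ ≤ Real.sqrt ρ2 * (Real.sqrt ρ2 ^ k * ‖∑ i, ep 0 i‖) :=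
            mul_le_mul_of_nonneg_left ih hsq0
        _ = Real.sqrt ρ2 ^ (k+1) * ‖∑ i, ep 0 i‖ := by ring
  -- matrix bound
  have hinvsum : ∑ i, ∑ j, Λe⁻¹ i j ≤ 1 / L := by
    have hRpos : 0 < R := by
      obtain ⟨⟨i, hi⟩, -⟩ := hRmin
      rw [← hi]
      exact inv_pos.2 (hRinv i)
    have hlam0pos : 0 < lam0 := by
      rw [hlam0]
      exact lt_of_lt_of_le one_pos (le_max_left _ _)
    have hc : 0 < 1 / lam0 + L := by positivity
    have hcL : L ≤ 1 / lam0 + L := by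
      have : 0 < 1 / lam0 := by positivity
      linarith
    exact aux_lambda_sum M hM hRpos hc hL hcL Λe hΛe
  -- main estimate
  intro m
  set g : Q := D (eu m) - D (eu (m+1)) - L • (∑ i, ep m i) with hgdef
  have hyp1 : ∀ w : U,
      ⟪E (eu (m+1)), E w⟫ + lam * ⟪D (eu (m+1)), D w⟫ - ⟪∑ i, ep (m+1) i, D w⟫ = 0 :=
    fun w => sub_eq_zero.2 (heq3 (m+1) w)
  have hyp3 : ∀ q : Fin n → Q,
      -⟪D (eu (m+1)), ∑ i, q i⟫ - ∑ i, ⟪Dv i (ev (m+1) i), q i⟫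
          - ∑ i, ∑ j, ((M + L • Matrix.of fun _ _ => (1 : ℝ) : Matrix (Fin n) (Fin n) ℝ)) i j * ⟪ep (m+1) j, q i⟫
        = ⟪g, ∑ i, q i⟫ := by
    intro q
    have h1 := heq1 m q
    have hsplit : ∑ i, ∑ j, ((M + L • Matrix.of fun _ _ => (1 : ℝ) : Matrix (Fin n) (Fin n) ℝ)) i j * ⟪ep (m+1) j, q i⟫
        = (∑ i, ∑ j, M i j * ⟪ep (m+1) j, q i⟫) + L * ⟪∑ j, ep (m+1) j, ∑ i, q i⟫ := by
      have e1 : ⟪∑ j, ep (m+1) j, ∑ i, q i⟫ = ∑ i, ∑ j, ⟪ep (m+1) j, q i⟫ := by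
        rw [sum_inner]
        rw [show (∑ j, ⟪ep (m+1) j, ∑ i, q i⟫) = ∑ j, ∑ i, ⟪ep (m+1) j, q i⟫ from
          Finset.sum_congr rfl fun j _ => inner_sum _ _ _]
        exact Finset.sum_comm
      rw [e1, Finset.mul_sum, ← Finset.sum_add_distrib]
      refine Finset.sum_congr rfl fun i _ => ?_
      rw [Finset.mul_sum, ← Finset.sum_add_distrib]
      refine Finset.sum_congr rfl fun j _ => ?_
      simp only [Matrix.add_apply, Matrix.smul_apply, Matrix.of_apply, smul_eq_mul, mul_one]
      ring
    have hg : ⟪g, ∑ i, q i⟫ = ⟪D (eu m), ∑ i, q i⟫ - ⟪D (eu (m+1)), ∑ i, q i⟫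
        - L * ⟪∑ j, ep m j, ∑ i, q i⟫ := by
      rw [hgdef, inner_sub_left, inner_sub_left, real_inner_smul_left]
    rw [hsplit, hg]
    linarith [h1]
  have key := hstab g (eu (m+1)) (ev (m+1)) (ep (m+1)) hyp1 (heq2 m) hyp3
  have hnU0 : 0 ≤ nU (eu (m+1)) := by
    rw [hnU]
    exact Real.sqrt_nonneg _
  have hgn : ‖g‖ ≤ 3 * L * (Real.sqrt ρ2 ^ m * ‖∑ i, ep 0 i‖) := by
    have t1 : ‖g‖ ≤ ‖D (eu m)‖ + ‖D (eu (m+1))‖ + L * ‖∑ i, ep m i‖ := by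
      have u1 := norm_sub_le (D (eu m) - D (eu (m+1))) (L • (∑ i, ep m i))
      have u2 := norm_sub_le (D (eu m)) (D (eu (m+1)))
      have u3 : ‖L • (∑ i, ep m i)‖ = L * ‖∑ i, ep m i‖ := by
        rw [norm_smul, Real.norm_eq_abs, abs_of_pos hL]
      rw [hgdef]
      linarith
    have hmono : Real.sqrt ρ2 ^ (m+1) * ‖∑ i, ep 0 i‖ ≤ Real.sqrt ρ2 ^ m * ‖∑ i, ep 0 i‖ :=
      mul_le_mul_of_nonneg_right (pow_le_pow_of_le_one hsq0 hsq1 (Nat.le_succ m))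
        (norm_nonneg _)
    have v1 := mul_le_mul_of_nonneg_left (hdecay m) hL.le
    have v2 := mul_le_mul_of_nonneg_left ((hdecay (m+1)).trans hmono) hL.le
    have w1 := (hDd m).trans v1
    have w2 := (hDd (m+1)).trans v2
    have w3 : L * ‖∑ i, ep m i‖ ≤ L * (Real.sqrt ρ2 ^ m * ‖∑ i, ep 0 i‖) := v1
    linarith
  have hsqrtsum : Real.sqrt (∑ i, ∑ j, Λe⁻¹ i j) ≤ 1 / Real.sqrt L := by
    have h1 : Real.sqrt (∑ i, ∑ j, Λe⁻¹ i j) ≤ Real.sqrt (1 / L) :=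
      Real.sqrt_le_sqrt hinvsum
    have h2 : Real.sqrt (1 / L) = 1 / Real.sqrt L := by
      rw [show (1:ℝ) / L = L⁻¹ from one_div L, Real.sqrt_inv, inv_eq_one_div]
    exact h1.trans_eq h2
  have hsLpos : 0 < Real.sqrt L := Real.sqrt_pos.2 hL
  have hLs2 : Real.sqrt L ^ 2 = L := Real.sq_sqrt hL.le
  calc nVe (ev (m+1)) + nPe (ep (m+1))
      ≤ C1 * Real.sqrt (∑ i, ∑ j, Λe⁻¹ i j) * ‖g‖ := by linarith
    _ ≤ C1 * (1 / Real.sqrt L) * ‖g‖ :=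
        mul_le_mul_of_nonneg_right
          (mul_le_mul_of_nonneg_left hsqrtsum hC1.le) (norm_nonneg _)
    _ ≤ C1 * (1 / Real.sqrt L) * (3 * L * (Real.sqrt ρ2 ^ m * ‖∑ i, ep 0 i‖)) :=
        mul_le_mul_of_nonneg_left hgn (by positivity)
    _ = 3 * C1 * Real.sqrt L * Real.sqrt ρ2 ^ m * ‖∑ i, ep 0 i‖ := by
        field_simp
        linear_combination (-‖∑ i, ep 0 i‖) * hLs2
end

section
/- In the fixed-stress error framework (bilinear-form version), if L ≥ 1/(λ + c_{K_d}²), then for every m ≥ 0: (1/2)(a(e_u^{m+1}, e_u^{m+1}) + λ ‖D e_u^{m+1}‖²) + Σᵢ Rᵢ⁻¹ ‖e_{v,i}^{m+1}‖² + Σᵢ,ⱼ Mᵢⱼ ⟨e_{p,j}^{m+1}, e_{p,i}^{m+1}⟩ + (L/2) ‖Σᵢ e_{p,i}^{m+1}‖² ≤ (L/2) ‖Σᵢ e_{p,i}^m‖². -/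
open scoped RealInnerProductSpace

private lemma fixed_stress_aux_s14 (L c2 s x : ℝ) (hc2 : 0 < c2) (hL : 0 < L)
    (hLc2 : 1 ≤ L * c2) (hx0 : 0 ≤ x) (hs0 : 0 ≤ s)
    (h3 : c2 * x ^ 2 ≤ s * x) : s * x ≤ L * s ^ 2 := by
  nlinarith [sq_nonneg (c2 * x - s),
    mul_le_mul_of_nonneg_left h3 (mul_nonneg hL.le hc2.le),
    mul_nonneg (sub_nonneg.2 hLc2) ((mul_nonneg hc2.le (sq_nonneg x)).trans h3)]

/-- Lemma 4 of the paper (discrete analogue of Lemma 1): in the fixed-stress error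
framework (bilinear-form version), if L ≥ 1/(λ + c_{K_d}²), then for every m ≥ 0 the
errors of the (m+1)-st fixed-stress iterate satisfy the contraction-type energy
estimate. -/
theorem fixed_stress_lemma_discrete
    {U Q : Type*}
    [NormedAddCommGroup U] [InnerProductSpace ℝ U] [CompleteSpace U]
    [NormedAddCommGroup Q] [InnerProductSpace ℝ Q] [CompleteSpace Q]
    (n : ℕ) (hn : 1 ≤ n)
    (V : Fin n → Type*)
    [∀ i, NormedAddCommGroup (V i)] [∀ i, InnerProductSpace ℝ (V i)]
    [∀ i, CompleteSpace (V i)]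
    (a : U →ₗ[ℝ] U →ₗ[ℝ] ℝ)
    (hasymm : ∀ u w : U, a u w = a w u) (hapsd : ∀ u : U, 0 ≤ a u u)
    (D : U →L[ℝ] Q) (Dv : ∀ i, V i →L[ℝ] Q)
    (lam L cKd : ℝ) (Rinv : Fin n → ℝ)
    (hlam : 0 < lam) (hL : 0 < L) (hRinv : ∀ i, 0 < Rinv i) (hcKd : 0 < cKd)
    (M : Matrix (Fin n) (Fin n) ℝ) (hM : M.PosSemidef)
    (hKorn : ∀ w : U, cKd ^ 2 * ‖D w‖ ^ 2 ≤ a w w)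
    (eu : ℕ → U) (ev : ℕ → ∀ i, V i) (ep : ℕ → Fin n → Q)
    (heq1 : ∀ (m : ℕ) (q : Fin n → Q),
      -(∑ i, ⟪Dv i (ev (m + 1) i), q i⟫)
          - ∑ i, ∑ j, M i j * ⟪ep (m + 1) j, q i⟫
          - L * ⟪∑ j, ep (m + 1) j, ∑ i, q i⟫
        = -(L * ⟪∑ j, ep m j, ∑ i, q i⟫) + ⟪D (eu m), ∑ i, q i⟫)
    (heq2 : ∀ (m : ℕ) (z : ∀ i, V i),
      ∑ i, Rinv i * ⟪ev (m + 1) i, z i⟫ - ∑ i, ⟪ep (m + 1) i, Dv i (z i)⟫ = 0)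
    (heq3 : ∀ (m : ℕ) (w : U),
      a (eu m) w + lam * ⟪D (eu m), D w⟫ = ⟪∑ i, ep m i, D w⟫)
    (hLge : 1 / (lam + cKd ^ 2) ≤ L) :
    ∀ m : ℕ,
      (1 / 2) * (a (eu (m + 1)) (eu (m + 1)) + lam * ‖D (eu (m + 1))‖ ^ 2)
          + ∑ i, Rinv i * ‖ev (m + 1) i‖ ^ 2
          + ∑ i, ∑ j, M i j * ⟪ep (m + 1) j, ep (m + 1) i⟫
          + (L / 2) * ‖∑ i, ep (m + 1) i‖ ^ 2
        ≤ (L / 2) * ‖∑ i, ep m i‖ ^ 2 := by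
  intro m
  have hc2 : 0 < lam + cKd ^ 2 := by positivity
  have hLc2 : 1 ≤ L * (lam + cKd ^ 2) := by
    rw [div_le_iff₀ hc2] at hLge; linarith
  -- combine heq2 into the first sum of heq1
  have hA := heq2 m (ev (m + 1))
  simp only [real_inner_self_eq_norm_sq] at hA
  have h1 : ∑ i, ⟪Dv i (ev (m + 1) i), ep (m + 1) i⟫
      = ∑ i, Rinv i * ‖ev (m + 1) i‖ ^ 2 := by
    have hc : ∑ i, ⟪Dv i (ev (m + 1) i), ep (m + 1) i⟫
        = ∑ i, ⟪ep (m + 1) i, Dv i (ev (m + 1) i)⟫ :=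
      Finset.sum_congr rfl fun i _ => real_inner_comm _ _
    rw [hc]; linarith
  have hB := heq1 m (ep (m + 1))
  rw [h1, real_inner_self_eq_norm_sq,
    real_inner_comm (∑ i, ep (m + 1) i) (D (eu m))] at hB
  -- instances of heq3
  have e1 := heq3 (m + 1) (eu (m + 1))
  have e2 := heq3 (m + 1) (eu m)
  have e3 := heq3 m (eu (m + 1))
  have e4 := heq3 m (eu m)
  rw [real_inner_self_eq_norm_sq] at e1 e4
  rw [hasymm (eu m) (eu (m + 1)),
    real_inner_comm (D (eu (m + 1))) (D (eu m))] at e3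
  -- energy identity for the increment
  have hDdu : D (eu (m + 1) - eu m) = D (eu (m + 1)) - D (eu m) := map_sub D _ _
  have hadu : a (eu (m + 1) - eu m) (eu (m + 1) - eu m)
      = a (eu (m + 1)) (eu (m + 1)) - 2 * a (eu (m + 1)) (eu m)
        + a (eu m) (eu m) := by
    simp only [map_sub, LinearMap.sub_apply]
    rw [hasymm (eu m) (eu (m + 1))]; ring
  have hn2 : ‖D (eu (m + 1) - eu m)‖ ^ 2
      = ‖D (eu (m + 1))‖ ^ 2 - 2 * ⟪D (eu (m + 1)), D (eu m)⟫
        + ‖D (eu m)‖ ^ 2 := by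
    rw [hDdu, norm_sub_sq_real]
  have hS : ⟪(∑ i, ep (m + 1) i) - ∑ i, ep m i, D (eu (m + 1) - eu m)⟫
      = ⟪∑ i, ep (m + 1) i, D (eu (m + 1))⟫
        - ⟪∑ i, ep (m + 1) i, D (eu m)⟫
        - ⟪∑ i, ep m i, D (eu (m + 1))⟫
        + ⟪∑ i, ep m i, D (eu m)⟫ := by
    rw [hDdu, inner_sub_left, inner_sub_right, inner_sub_right]; ring
  have hnP : ‖(∑ i, ep (m + 1) i) - ∑ i, ep m i‖ ^ 2
      = ‖∑ i, ep (m + 1) i‖ ^ 2 - 2 * ⟪∑ i, ep m i, ∑ i, ep (m + 1) i⟫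
        + ‖∑ i, ep m i‖ ^ 2 := by
    rw [norm_sub_sq_real, real_inner_comm]
  -- Korn + Cauchy-Schwarz bound
  have hKd := hKorn (eu (m + 1) - eu m)
  have hCS := real_inner_le_norm ((∑ i, ep (m + 1) i) - ∑ i, ep m i)
    (D (eu (m + 1) - eu m))
  have hddu : a (eu (m + 1) - eu m) (eu (m + 1) - eu m)
      + lam * ‖D (eu (m + 1) - eu m)‖ ^ 2
      = ⟪(∑ i, ep (m + 1) i) - ∑ i, ep m i, D (eu (m + 1) - eu m)⟫ := by
    rw [hadu, hn2, hS]; linarith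
  have hb : ⟪(∑ i, ep (m + 1) i) - ∑ i, ep m i, D (eu (m + 1) - eu m)⟫
      ≤ L * ‖(∑ i, ep (m + 1) i) - ∑ i, ep m i‖ ^ 2 := by
    set s := ‖(∑ i, ep (m + 1) i) - ∑ i, ep m i‖ with hs
    set x := ‖D (eu (m + 1) - eu m)‖ with hx
    have hx0 : 0 ≤ x := norm_nonneg _
    have hs0 : 0 ≤ s := norm_nonneg _
    have h2 : (lam + cKd ^ 2) * x ^ 2
        ≤ ⟪(∑ i, ep (m + 1) i) - ∑ i, ep m i, D (eu (m + 1) - eu m)⟫ := by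
      linarith [hKd, hddu]
    have h3 : (lam + cKd ^ 2) * x ^ 2 ≤ s * x := h2.trans hCS
    have h7 := fixed_stress_aux_s14 L (lam + cKd ^ 2) s x hc2 hL hLc2 hx0 hs0 h3
    linarith only [hCS, h7]
  rw [hS, hnP] at hb
  rw [hS, hadu, hn2] at hddu
  linarith only [hapsd (eu m), mul_nonneg hlam.le (sq_nonneg ‖D (eu m)‖), hb, hddu,
    hB, e1, e2, e3, e4]
end

section
/- In the fixed-stress error framework (bilinear-form version), assume additionally that there is β_{sd} > 0 such that for every s ∈ Q there exists w ∈ U with D w = s and a(w, w) ≤ β_{sd}⁻² ‖s‖², and that L ≥ 1/(λ + c_{K_d}²). Set ρ_d² := 1/(L⁻¹/(β_{sd}⁻² + λ) + 1). Then for every m ≥ 0: a(e_u^m, e_u^m) + λ ‖D e_u^m‖² ≤ (λ + c_{K_d}²)⁻¹ ρ_d^{2m} ‖Σᵢ e_{p,i}^0‖². -/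
open scoped RealInnerProductSpace
open Matrix

lemma bilin_cauchy_schwarz {U : Type*} [NormedAddCommGroup U] [InnerProductSpace ℝ U]
    (a : U →ₗ[ℝ] U →ₗ[ℝ] ℝ) (hs : ∀ u w : U, a u w = a w u) (hp : ∀ u : U, 0 ≤ a u u)
    (u w : U) : (a u w) ^ 2 ≤ a u u * a w w := by
  have key : ∀ t : ℝ, 0 ≤ a w w * (t * t) + (2 * a u w) * t + a u u := by
    intro t
    have h := hp (u + t • w)
    simp only [map_add, _root_.map_smul, LinearMap.add_apply, LinearMap.smul_apply,
      smul_eq_mul] at h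
    rw [← hs u w] at h
    ring_nf at h ⊢
    linarith
  have hd := discrim_le_zero key
  rw [discrim] at hd
  nlinarith [hd]

lemma psd_sum_inner {Q : Type*} [NormedAddCommGroup Q] [InnerProductSpace ℝ Q]
    {n : ℕ} (M : Matrix (Fin n) (Fin n) ℝ) (hM : M.PosSemidef) (q : Fin n → Q) :
    0 ≤ ∑ i, ∑ j, M i j * ⟪q j, q i⟫ := by
  obtain ⟨B, rfl⟩ : ∃ B : Matrix (Fin n) (Fin n) ℝ, M = Bᴴ * B := by
    open scoped MatrixOrder Matrix.Norms.L2Operator in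
    exact CStarAlgebra.nonneg_iff_eq_star_mul_self.mp hM.nonneg
  have key : ∑ i, ∑ j, (Bᴴ * B) i j * ⟪q j, q i⟫
      = ∑ k, ⟪∑ j, B k j • q j, ∑ j, B k j • q j⟫ := by
    simp only [Matrix.mul_apply, Matrix.conjTranspose_apply, star_trivial,
      sum_inner, inner_sum, real_inner_smul_left, real_inner_smul_right,
      Finset.sum_mul]
    calc ∑ x, ∑ y, ∑ k, B k x * B k y * ⟪q y, q x⟫
        = ∑ x, ∑ k, ∑ y, B k x * B k y * ⟪q y, q x⟫ :=
          Finset.sum_congr rfl fun _ _ => Finset.sum_comm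
      _ = ∑ k, ∑ x, ∑ y, B k x * B k y * ⟪q y, q x⟫ := Finset.sum_comm
      _ = ∑ k, ∑ x, ∑ y, B k x * (B k y * ⟪q y, q x⟫) :=
          Finset.sum_congr rfl fun _ _ => Finset.sum_congr rfl fun _ _ =>
            Finset.sum_congr rfl fun _ _ => by ring
  rw [key]
  exact Finset.sum_nonneg fun k _ => real_inner_self_nonneg

lemma key_arith (p x am lam binv : ℝ) (hlam : 0 < lam) (hb : 0 ≤ binv) (hxnn : 0 ≤ x)
    (h6 : am * p ≤ x * p - lam * x ^ 2)
    (h4 : (p - lam * x) ^ 2 ≤ am * (binv * p)) :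
    p ≤ (binv + lam) * x := by
  have h8 : (p - lam * x) ^ 2 ≤ binv * x * (p - lam * x) := by
    nlinarith [mul_le_mul_of_nonneg_left h6 hb]
  rcases le_or_gt (p - lam * x) 0 with h9 | h9
  · nlinarith [mul_nonneg hb hxnn]
  · nlinarith [h8, h9]

lemma h5_arith (p x am d lam : ℝ) (hlam : 0 < lam) (h6 : x = am + lam * d)
    (h7 : x ^ 2 ≤ p * d) : am * p ≤ x * p - lam * x ^ 2 := by
  have h6p : am * p = x * p - lam * d * p := by rw [h6]; ring
  nlinarith [h6p, mul_le_mul_of_nonneg_left h7 hlam.le]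

lemma CS_arith (x N1 N2 : ℝ) (h0 : 0 ≤ x) (h1 : x ≤ N1 * N2) (hN1 : 0 ≤ N1)
    (hN2 : 0 ≤ N2) : x ^ 2 ≤ N1 ^ 2 * N2 ^ 2 := by nlinarith

lemma dL_arith (L c d x : ℝ) (hL : 0 < L) (hd : 0 ≤ d) (h1 : c * d ≤ x)
    (h2 : 1 ≤ L * c) : d ≤ L * x := by
  nlinarith [mul_le_mul_of_nonneg_left h1 hL.le, mul_le_mul_of_nonneg_left h2 hd]

lemma rho_arith (L K ρ : ℝ) (hL : 0 < L) (hK : 0 < K)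
    (hval : ρ = L * K / (1 + L * K)) : L ^ 2 - L / K ≤ L ^ 2 * ρ := by
  have h1 : (0:ℝ) < 1 + L * K := by positivity
  have key : (L ^ 2 - L / K) * K ≤ (L ^ 2 * ρ) * K := by
    have hx : (L ^ 2 - L / K) * K = L ^ 2 * K - L := by
      rw [sub_mul, div_mul_cancel₀ _ hK.ne']
    rw [hx, hval,
      show L ^ 2 * (L * K / (1 + L * K)) * K = L ^ 3 * K ^ 2 / (1 + L * K) by ring,
      le_div_iff₀ h1]
    nlinarith [hL]
  exact le_of_mul_le_mul_right key hK

lemma contraction_arith (L K ρ p x d Nv np : ℝ)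
    (hL : 0 < L) (hK : 0 < K) (hρ : L ^ 2 - L / K ≤ L ^ 2 * ρ) (hρ0 : 0 ≤ ρ)
    (hNv : 0 ≤ Nv) (hnp : 0 ≤ np) (hp : 0 ≤ p)
    (hx : 0 ≤ x) (hd0 : 0 ≤ d)
    (hdL : d ≤ L * x) (hkey : p ≤ K * x)
    (hN2 : Nv ^ 2 = L ^ 2 * p - 2 * L * x + d)
    (hstep : L * np ^ 2 ≤ Nv * np) :
    np ^ 2 ≤ ρ * p := by
  have hc1 : L / K * K = L := div_mul_cancel₀ L hK.ne'
  have h10 : Nv ^ 2 ≤ L ^ 2 * ρ * p := by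
    have hkx : L / K * p ≤ L / K * (K * x) :=
      mul_le_mul_of_nonneg_left hkey (div_nonneg hL.le hK.le)
    have hkx2 : L / K * (K * x) = L * x := by rw [← mul_assoc, hc1]
    have hρp := mul_le_mul_of_nonneg_right hρ hp
    nlinarith [hkx, hkx2, hρp]
  have h11 : L ^ 2 * (np ^ 2) ^ 2 ≤ (L ^ 2 * ρ * p) * np ^ 2 := by
    nlinarith [mul_self_le_mul_self (mul_nonneg hL.le (sq_nonneg np)) hstep,
      mul_le_mul_of_nonneg_right h10 (sq_nonneg np)]
  rcases (sq_nonneg np).eq_or_lt with h0 | h0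
  · nlinarith [mul_nonneg hρ0 hp]
  · nlinarith [h11, h0, mul_pos (mul_pos hL hL) h0]

lemma E_arith (p x d c : ℝ) (hc : 0 < c) (h0 : 0 < x) (hp : 0 ≤ p) (hd : 0 ≤ d)
    (hCS : x ^ 2 ≤ p * d) (hK : c * d ≤ x) : x ≤ c⁻¹ * p := by
  have h1 : c * x ≤ p := by
    nlinarith [mul_le_mul_of_nonneg_left hK hp, mul_le_mul_of_nonneg_left hCS hc.le]
  calc x = c⁻¹ * (c * x) := by field_simp
    _ ≤ c⁻¹ * p := mul_le_mul_of_nonneg_left h1 (inv_nonneg.mpr hc.le)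


/-- Discrete displacement estimate (error_eu:dis) of Theorem 5: under the abstract
discrete Stokes inf-sup condition and L ≥ 1/(λ + c_{K_d}²), with
ρ_d² = 1/(L⁻¹/(β_{sd}⁻² + λ) + 1), the displacement errors satisfy
a(e_u^m, e_u^m) + λ‖D e_u^m‖² ≤ (λ + c_{K_d}²)⁻¹ ρ_d^{2m} ‖Σᵢ e_{p,i}^0‖². -/
theorem fixed_stress_displacement_decay_discrete
    {U Q : Type*}
    [NormedAddCommGroup U] [InnerProductSpace ℝ U] [CompleteSpace U]
    [NormedAddCommGroup Q] [InnerProductSpace ℝ Q] [CompleteSpace Q]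
    (n : ℕ) (hn : 1 ≤ n)
    (V : Fin n → Type*)
    [∀ i, NormedAddCommGroup (V i)] [∀ i, InnerProductSpace ℝ (V i)]
    [∀ i, CompleteSpace (V i)]
    (a : U →ₗ[ℝ] U →ₗ[ℝ] ℝ)
    (hasymm : ∀ u w : U, a u w = a w u) (hapsd : ∀ u : U, 0 ≤ a u u)
    (D : U →L[ℝ] Q) (Dv : ∀ i, V i →L[ℝ] Q)
    (lam L cKd : ℝ) (Rinv : Fin n → ℝ)
    (hlam : 0 < lam) (hL : 0 < L) (hRinv : ∀ i, 0 < Rinv i) (hcKd : 0 < cKd)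
    (M : Matrix (Fin n) (Fin n) ℝ) (hM : M.PosSemidef)
    (hKorn : ∀ w : U, cKd ^ 2 * ‖D w‖ ^ 2 ≤ a w w)
    (eu : ℕ → U) (ev : ℕ → ∀ i, V i) (ep : ℕ → Fin n → Q)
    (heq1 : ∀ (m : ℕ) (q : Fin n → Q),
      -(∑ i, ⟪Dv i (ev (m + 1) i), q i⟫)
          - ∑ i, ∑ j, M i j * ⟪ep (m + 1) j, q i⟫
          - L * ⟪∑ j, ep (m + 1) j, ∑ i, q i⟫
        = -(L * ⟪∑ j, ep m j, ∑ i, q i⟫) + ⟪D (eu m), ∑ i, q i⟫)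
    (heq2 : ∀ (m : ℕ) (z : ∀ i, V i),
      ∑ i, Rinv i * ⟪ev (m + 1) i, z i⟫ - ∑ i, ⟪ep (m + 1) i, Dv i (z i)⟫ = 0)
    (heq3 : ∀ (m : ℕ) (w : U),
      a (eu m) w + lam * ⟪D (eu m), D w⟫ = ⟪∑ i, ep m i, D w⟫)
    (hLge : 1 / (lam + cKd ^ 2) ≤ L)
    (βsd : ℝ) (hβsd : 0 < βsd)
    (hinfsup : ∀ s : Q, ∃ w : U, D w = s ∧ a w w ≤ (βsd ^ 2)⁻¹ * ‖s‖ ^ 2)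
    (ρd2 : ℝ) (hρd2 : ρd2 = 1 / (L⁻¹ / ((βsd ^ 2)⁻¹ + lam) + 1)) :
    ∀ m : ℕ,
      a (eu m) (eu m) + lam * ‖D (eu m)‖ ^ 2
        ≤ (lam + cKd ^ 2)⁻¹ * ρd2 ^ m * ‖∑ i, ep 0 i‖ ^ 2 := by
  have hβ2 : (0:ℝ) < (βsd ^ 2)⁻¹ := by positivity
  have hKpos : (0:ℝ) < (βsd ^ 2)⁻¹ + lam := by positivity
  have hpos : (0:ℝ) < lam + cKd ^ 2 := by positivity
  have h1LK : (0:ℝ) < 1 + L * ((βsd ^ 2)⁻¹ + lam) := by positivity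
  have hval : ρd2 = L * ((βsd ^ 2)⁻¹ + lam) / (1 + L * ((βsd ^ 2)⁻¹ + lam)) := by
    have hd1 : (0:ℝ) < L⁻¹ / ((βsd ^ 2)⁻¹ + lam) + 1 := by positivity
    rw [hρd2, div_eq_div_iff hd1.ne' h1LK.ne']
    field_simp
  have hρpos : 0 < ρd2 := by
    rw [hval]; positivity
  have hx : ∀ m : ℕ, ⟪∑ i, ep m i, D (eu m)⟫
      = a (eu m) (eu m) + lam * ‖D (eu m)‖ ^ 2 := by
    intro m
    have h := heq3 m (eu m)
    rw [real_inner_self_eq_norm_sq] at h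
    linarith
  have hxnn : ∀ m : ℕ, 0 ≤ ⟪∑ i, ep m i, D (eu m)⟫ := by
    intro m
    rw [hx m]
    have h1 := hapsd (eu m)
    positivity
  have hKorn' : ∀ m : ℕ, (lam + cKd ^ 2) * ‖D (eu m)‖ ^ 2
      ≤ ⟪∑ i, ep m i, D (eu m)⟫ := by
    intro m
    rw [hx m]
    nlinarith [hKorn (eu m)]
  have hCS : ∀ m : ℕ, ⟪∑ i, ep m i, D (eu m)⟫ ^ 2
      ≤ ‖∑ i, ep m i‖ ^ 2 * ‖D (eu m)‖ ^ 2 := by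
    intro m
    exact CS_arith _ _ _ (hxnn m) (real_inner_le_norm _ _)
      (norm_nonneg _) (norm_nonneg _)
  -- the inf-sup estimate : p ≤ K x
  have hkey : ∀ m : ℕ, ‖∑ i, ep m i‖ ^ 2
      ≤ ((βsd ^ 2)⁻¹ + lam) * ⟪∑ i, ep m i, D (eu m)⟫ := by
    intro m
    obtain ⟨w, hw1, hw2⟩ := hinfsup (∑ i, ep m i)
    have h3 := heq3 m w
    rw [hw1, real_inner_self_eq_norm_sq,
      real_inner_comm (∑ i, ep m i) (D (eu m))] at h3
    have hcs2 := bilin_cauchy_schwarz a hasymm hapsd (eu m) w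
    have ham : 0 ≤ a (eu m) (eu m) := hapsd (eu m)
    have haw : a (eu m) w
        = ‖∑ i, ep m i‖ ^ 2 - lam * ⟪∑ i, ep m i, D (eu m)⟫ := by linarith
    have h4 : (‖∑ i, ep m i‖ ^ 2 - lam * ⟪∑ i, ep m i, D (eu m)⟫) ^ 2
        ≤ a (eu m) (eu m) * ((βsd ^ 2)⁻¹ * ‖∑ i, ep m i‖ ^ 2) := by
      rw [← haw]
      exact hcs2.trans (mul_le_mul_of_nonneg_left hw2 ham)
    have h5 := h5_arith (‖∑ i, ep m i‖ ^ 2) (⟪∑ i, ep m i, D (eu m)⟫)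
      (a (eu m) (eu m)) (‖D (eu m)‖ ^ 2) lam hlam (hx m) (hCS m)
    exact key_arith _ _ _ lam _ hlam hβ2.le (hxnn m) h5 h4
  -- one-step contraction
  have hcontr : ∀ m : ℕ, ‖∑ i, ep (m + 1) i‖ ^ 2 ≤ ρd2 * ‖∑ i, ep m i‖ ^ 2 := by
    intro m
    have h1 := heq1 m (ep (m + 1))
    have h2 := heq2 m (ev (m + 1))
    have hT1 : 0 ≤ ∑ i, ⟪Dv i (ev (m + 1) i), ep (m + 1) i⟫ := by
      have h2' : ∑ i, ⟪ep (m + 1) i, Dv i (ev (m + 1) i)⟫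
          = ∑ i, Rinv i * ⟪ev (m + 1) i, ev (m + 1) i⟫ := by linarith
      have h2'' : ∑ i, ⟪Dv i (ev (m + 1) i), ep (m + 1) i⟫
          = ∑ i, ⟪ep (m + 1) i, Dv i (ev (m + 1) i)⟫ :=
        Finset.sum_congr rfl fun i _ => real_inner_comm _ _
      rw [h2'', h2']
      exact Finset.sum_nonneg fun i _ =>
        mul_nonneg (hRinv i).le real_inner_self_nonneg
    have hT2 : 0 ≤ ∑ i, ∑ j, M i j * ⟪ep (m + 1) j, ep (m + 1) i⟫ :=
      psd_sum_inner M hM _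
    rw [real_inner_self_eq_norm_sq] at h1
    have h7 : L * ‖∑ i, ep (m + 1) i‖ ^ 2
        ≤ ⟪L • (∑ i, ep m i) - D (eu m), ∑ i, ep (m + 1) i⟫ := by
      rw [inner_sub_left, real_inner_smul_left]
      linarith
    have h8 := real_inner_le_norm (L • (∑ i, ep m i) - D (eu m)) (∑ i, ep (m + 1) i)
    have h9 : ‖L • (∑ i, ep m i) - D (eu m)‖ ^ 2
        = L ^ 2 * ‖∑ i, ep m i‖ ^ 2 - 2 * L * ⟪∑ i, ep m i, D (eu m)⟫
          + ‖D (eu m)‖ ^ 2 := by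
      rw [norm_sub_sq_real, norm_smul, real_inner_smul_left, mul_pow,
        Real.norm_eq_abs, sq_abs]
      ring
    have h1L : 1 ≤ L * (lam + cKd ^ 2) := by
      rw [div_le_iff₀ hpos] at hLge
      linarith
    have hdL : ‖D (eu m)‖ ^ 2 ≤ L * ⟪∑ i, ep m i, D (eu m)⟫ :=
      dL_arith L (lam + cKd ^ 2) _ _ hL (sq_nonneg _) (hKorn' m) h1L
    have hρ : L ^ 2 - L / ((βsd ^ 2)⁻¹ + lam) ≤ L ^ 2 * ρd2 :=
      rho_arith L _ ρd2 hL hKpos hval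
    exact contraction_arith L ((βsd ^ 2)⁻¹ + lam) ρd2 (‖∑ i, ep m i‖ ^ 2)
      (⟪∑ i, ep m i, D (eu m)⟫) (‖D (eu m)‖ ^ 2)
      (‖L • (∑ i, ep m i) - D (eu m)‖) (‖∑ i, ep (m + 1) i‖)
      hL hKpos hρ hρpos.le (norm_nonneg _) (norm_nonneg _) (sq_nonneg _)
      (hxnn m) (sq_nonneg _) hdL (hkey m) h9 (h7.trans h8)
  have hdecay : ∀ m : ℕ, ‖∑ i, ep m i‖ ^ 2 ≤ ρd2 ^ m * ‖∑ i, ep 0 i‖ ^ 2 := by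
    intro m
    induction m with
    | zero => simp
    | succ k ih =>
      calc ‖∑ i, ep (k + 1) i‖ ^ 2 ≤ ρd2 * ‖∑ i, ep k i‖ ^ 2 := hcontr k
        _ ≤ ρd2 * (ρd2 ^ k * ‖∑ i, ep 0 i‖ ^ 2) :=
            mul_le_mul_of_nonneg_left ih hρpos.le
        _ = ρd2 ^ (k + 1) * ‖∑ i, ep 0 i‖ ^ 2 := by ring
  intro m
  have hE : a (eu m) (eu m) + lam * ‖D (eu m)‖ ^ 2
      ≤ (lam + cKd ^ 2)⁻¹ * ‖∑ i, ep m i‖ ^ 2 := by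
    rw [← hx m]
    rcases (hxnn m).eq_or_lt with h0 | h0
    · rw [← h0]
      positivity
    · exact E_arith (‖∑ i, ep m i‖ ^ 2) _ (‖D (eu m)‖ ^ 2) (lam + cKd ^ 2)
        hpos h0 (sq_nonneg _) (sq_nonneg _) (hCS m) (hKorn' m)
  calc a (eu m) (eu m) + lam * ‖D (eu m)‖ ^ 2
      ≤ (lam + cKd ^ 2)⁻¹ * ‖∑ i, ep m i‖ ^ 2 := hE
    _ ≤ (lam + cKd ^ 2)⁻¹ * (ρd2 ^ m * ‖∑ i, ep 0 i‖ ^ 2) :=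
        mul_le_mul_of_nonneg_left (hdecay m) (inv_nonneg.mpr hpos.le)
    _ = (lam + cKd ^ 2)⁻¹ * ρd2 ^ m * ‖∑ i, ep 0 i‖ ^ 2 := by ring
end
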